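/- arXiv:0707.4124 — 5 statements merged into one kernel-verified Lean document; each statement's English description precedes it below -/
import Mathlib

section
/- For every integer n ≥ 1, the conditional law of σ_0 given Δ_n equals the convolution of the conditional law of σ_1 given Δ_n with Exp(λ+μ): L[σ_0 | Δ_n] = L[σ_1 | Δ_n] ⋆ Exp(λ+μ). -/
open MeasureTheory ProbabilityTheory Real Set
open scoped ENNReal NNReal

/-- The event that the busy period initiated by customer 0 contains exactly `n+1` customers:
the `i`-th partial sum of inter-arrival times is smaller than the `i`-th partial sum of service
times for `i = 0, …, n-1`, and the `n`-th partial sum of inter-arrival times is at least the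
`n`-th partial sum of service times. -/
def busyDelta {Ω : Type*} (τ σ : ℕ → Ω → ℝ) (n : ℕ) : Set Ω :=
  {ω | (∀ i < n, ∑ j ∈ Finset.range (i + 1), τ j ω < ∑ j ∈ Finset.range (i + 1), σ j ω) ∧
       ∑ j ∈ Finset.range (n + 1), σ j ω ≤ ∑ j ∈ Finset.range (n + 1), τ j ω}

namespace BusyCondAux

lemma expMeasure_eq_withDensity (r : ℝ) :
    expMeasure r = (volume : Measure ℝ).withDensity (exponentialPDF r) := rfl

lemma measurable_exponentialPDF (r : ℝ) : Measurable (exponentialPDF r) :=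
  (measurable_exponentialPDFReal r).ennreal_ofReal

lemma expMeasure_Iic_zero {r : ℝ} : expMeasure r (Iic 0) = 0 := by
  rw [expMeasure_eq_withDensity, withDensity_apply _ measurableSet_Iic,
    show (volume : Measure ℝ).restrict (Iic 0) = volume.restrict (Iio 0) from
      (Measure.restrict_congr_set Iio_ae_eq_Iic).symm]
  exact lintegral_exponentialPDF_of_nonpos le_rfl

lemma smul_prod'' {α β : Type*} [MeasurableSpace α] [MeasurableSpace β]
    (c : ℝ≥0∞) (μ : Measure α) (ν : Measure β) [SFinite μ] [SFinite ν] :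
    (c • μ).prod ν = c • (μ.prod ν) := by
  ext s hs
  rw [Measure.prod_apply hs, Measure.smul_apply, Measure.prod_apply hs, smul_eq_mul,
    lintegral_smul_measure, smul_eq_mul]

lemma conv_smul_left (c : ℝ≥0∞) (μ ν : Measure ℝ) [SFinite μ] [SFinite ν] :
    (c • μ).conv ν = c • (μ.conv ν) := by
  unfold Measure.conv
  rw [smul_prod'', Measure.map_smul]

lemma expMeasure_prod (a b : ℝ) (ha : 0 < a) (hb : 0 < b) :
    (expMeasure a).prod (expMeasure b)
      = ((volume : Measure ℝ).prod volume).withDensity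
          (fun p => exponentialPDF a p.1 * exponentialPDF b p.2) := by
  haveI := isProbabilityMeasure_expMeasure ha
  haveI := isProbabilityMeasure_expMeasure hb
  refine (Measure.prod_eq fun s t hs ht => ?_)
  rw [withDensity_apply _ (hs.prod ht), ← Measure.prod_restrict,
    lintegral_prod_mul (measurable_exponentialPDF a).aemeasurable
      (measurable_exponentialPDF b).aemeasurable,
    expMeasure_eq_withDensity, expMeasure_eq_withDensity,
    withDensity_apply _ hs, withDensity_apply _ ht]

lemma shear_withDensity (F : ℝ × ℝ → ℝ≥0∞) (hF : Measurable F) :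
    ((((volume : Measure ℝ).prod volume).withDensity F).map
        (fun p : ℝ × ℝ => (p.1, p.1 + p.2)))
      = ((volume : Measure ℝ).prod volume).withDensity (fun p => F (p.1, p.2 - p.1)) := by
  set ψ : ℝ × ℝ → ℝ × ℝ := fun p => (p.1, p.1 + p.2) with hψdef
  have hψ : Measurable ψ := by fun_prop
  have hmp := MeasureTheory.measurePreserving_prod_add (volume : Measure ℝ) volume
  ext s hs
  rw [Measure.map_apply hψ hs, withDensity_apply _ (hψ hs), withDensity_apply _ hs]
  have h1 : ∫⁻ p in s, F (p.1, p.2 - p.1) ∂((volume : Measure ℝ).prod volume)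
      = ∫⁻ p in s, F (p.1, p.2 - p.1) ∂(((volume : Measure ℝ).prod volume).map ψ) := by
    rw [hmp.map_eq]
  rw [h1, setLIntegral_map (f := fun p : ℝ × ℝ => F (p.1, p.2 - p.1)) hs
    (hF.comp (measurable_fst.prodMk (measurable_snd.sub measurable_fst))) hψ]
  refine setLIntegral_congr_fun (hψ hs) (fun p _ => ?_)
  simp [ψ]

lemma core2d {lam mu : ℝ} (hlam : 0 < lam) (hmu : 0 < mu) :
    (ENNReal.ofReal (lam / (lam + mu))) •
        (((expMeasure (lam + mu)).prod (expMeasure mu)).map (fun p : ℝ × ℝ => (p.1, p.1 + p.2)))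
      = ((expMeasure lam).prod (expMeasure mu)).restrict {p : ℝ × ℝ | p.1 < p.2} := by
  have hlm : 0 < lam + mu := by linarith
  set c : ℝ≥0∞ := ENNReal.ofReal (lam / (lam + mu)) with hc
  have hA : MeasurableSet {p : ℝ × ℝ | p.1 < p.2} := measurableSet_lt measurable_fst measurable_snd
  rw [expMeasure_prod _ _ hlm hmu, expMeasure_prod _ _ hlam hmu,
    shear_withDensity (fun p => exponentialPDF (lam + mu) p.1 * exponentialPDF mu p.2)
      (((measurable_exponentialPDF _).comp measurable_fst).mul
        ((measurable_exponentialPDF _).comp measurable_snd)),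
    restrict_withDensity hA, ← withDensity_indicator hA, ← withDensity_smul
      (f := fun p : ℝ × ℝ => exponentialPDF (lam + mu) (p.1, p.2 - p.1).1
        * exponentialPDF mu (p.1, p.2 - p.1).2) c
      (((measurable_exponentialPDF _).comp measurable_fst).mul
        ((measurable_exponentialPDF _).comp (measurable_snd.sub measurable_fst)))]
  refine withDensity_congr_ae ?_
  have hdiag : ((volume : Measure ℝ).prod volume) {p : ℝ × ℝ | p.1 = p.2} = 0 := by
    rw [Measure.prod_apply (measurableSet_eq_fun measurable_fst measurable_snd)]
    have : ∀ x : ℝ, (volume : Measure ℝ) (Prod.mk x ⁻¹' {p : ℝ × ℝ | p.1 = p.2}) = 0 := by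
      intro x
      have : (Prod.mk x ⁻¹' {p : ℝ × ℝ | p.1 = p.2}) = {x} := by
        ext y; simp [eq_comm]
      rw [this]; exact measure_singleton x
    simp [this]
  rw [Filter.EventuallyEq, ae_iff]
  refine measure_mono_null (fun p hp => ?_) hdiag
  simp only [mem_setOf_eq, Pi.smul_apply, smul_eq_mul] at hp ⊢
  by_contra hne
  apply hp
  rcases lt_trichotomy p.1 p.2 with h | h | h
  · rw [Set.indicator_of_mem (by exact h)]
    by_cases h0 : 0 ≤ p.1
    · rw [exponentialPDF_of_nonneg h0, exponentialPDF_of_nonneg (by linarith : (0:ℝ) ≤ p.2 - p.1),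
        exponentialPDF_of_nonneg h0, exponentialPDF_of_nonneg (by linarith : (0:ℝ) ≤ p.2)]
      rw [← ENNReal.ofReal_mul (by positivity), ← ENNReal.ofReal_mul (by positivity),
        ← ENNReal.ofReal_mul (by positivity)]
      congr 1
      have h1 : rexp (-((lam + mu) * p.1)) * rexp (-(mu * (p.2 - p.1)))
          = rexp (-(lam * p.1)) * rexp (-(mu * p.2)) := by
        rw [← Real.exp_add, ← Real.exp_add]; congr 1; ring
      have h2 : lam / (lam + mu) * (lam + mu) = lam := div_mul_cancel₀ _ (by positivity)
      calc lam / (lam + mu) * ((lam + mu) * rexp (-((lam + mu) * p.1)) * (mu * rexp (-(mu * (p.2 - p.1)))))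
          = (lam / (lam + mu) * (lam + mu)) * mu *
              (rexp (-((lam + mu) * p.1)) * rexp (-(mu * (p.2 - p.1)))) := by ring
        _ = lam * mu * (rexp (-(lam * p.1)) * rexp (-(mu * p.2))) := by rw [h1, h2]
        _ = lam * rexp (-(lam * p.1)) * (mu * rexp (-(mu * p.2))) := by ring
    · push_neg at h0
      rw [exponentialPDF_of_neg h0, exponentialPDF_of_neg h0]
      simp
  · exact absurd h hne
  · rw [Set.indicator_of_notMem (by exact not_lt.mpr h.le)]
    rw [exponentialPDF_of_neg (by linarith : p.2 - p.1 < 0)]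
    simp


/-! ### canonical space -/

abbrev Gn (n : ℕ) : Type := (Fin n → ℝ) × (Fin n → ℝ)
abbrev En (n : ℕ) : Type := ℝ × ℝ × ℝ × Gn n

def tvalE (n k : ℕ) (w : Gn n) : ℝ := if h : k < n then w.1 ⟨k, h⟩ else 0
def svalE (n k : ℕ) (w : Gn n) : ℝ := if h : k < n then w.2 ⟨k, h⟩ else 0

def svE (n : ℕ) : ℕ → ℝ → Gn n → ℝ
  | 0 => fun s _ => s
  | (k+1) => fun _ w => svalE n k w

def ttE (n : ℕ) : ℕ → En n → ℝ
  | 0 => fun x => x.1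
  | (j+1) => fun x => tvalE n j x.2.2.2

def ssE (n : ℕ) : ℕ → En n → ℝ
  | 0 => fun x => x.2.1
  | (j+1) => fun x => svE n j x.2.2.1 x.2.2.2

def DD (n : ℕ) : Set (En n) := busyDelta (ttE n) (ssE n) n

def TTn (n i : ℕ) (w : Gn n) : ℝ := ∑ j ∈ Finset.range i, tvalE n j w
def SSn (n i : ℕ) (s : ℝ) (w : Gn n) : ℝ := ∑ j ∈ Finset.range i, svE n j s w

def Cond (n : ℕ) (a b s : ℝ) (w : Gn n) : Prop :=
  (∀ i < n, a + TTn n i w < b + SSn n i s w) ∧ b + SSn n n s w ≤ a + TTn n n w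

lemma measurable_tvalE (n k : ℕ) : Measurable (tvalE n k) := by
  unfold tvalE; split_ifs with h
  · exact (measurable_pi_apply _).comp measurable_fst
  · exact measurable_const

lemma measurable_svalE (n k : ℕ) : Measurable (svalE n k) := by
  unfold svalE; split_ifs with h
  · exact (measurable_pi_apply _).comp measurable_snd
  · exact measurable_const

lemma measurable_ttE (n j : ℕ) : Measurable (ttE n j) := by
  cases j with
  | zero => exact measurable_fst
  | succ k =>
    exact (measurable_tvalE n k).comp (measurable_snd.comp (measurable_snd.comp measurable_snd))

lemma measurable_ssE (n j : ℕ) : Measurable (ssE n j) := by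
  cases j with
  | zero => exact measurable_fst.comp measurable_snd
  | succ k =>
    cases k with
    | zero => exact measurable_fst.comp (measurable_snd.comp measurable_snd)
    | succ k' =>
      exact (measurable_svalE n k').comp (measurable_snd.comp (measurable_snd.comp measurable_snd))

lemma measurableSet_DD (n : ℕ) : MeasurableSet (DD n) := by
  have h1 : ∀ i : ℕ, Measurable fun x : En n => ∑ j ∈ Finset.range (i+1), ttE n j x :=
    fun i => Finset.measurable_sum _ fun j _ => measurable_ttE n j
  have h2 : ∀ i : ℕ, Measurable fun x : En n => ∑ j ∈ Finset.range (i+1), ssE n j x :=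
    fun i => Finset.measurable_sum _ fun j _ => measurable_ssE n j
  have : DD n = (⋂ i, ⋂ (_ : i < n),
      {x : En n | ∑ j ∈ Finset.range (i+1), ttE n j x < ∑ j ∈ Finset.range (i+1), ssE n j x}) ∩
      {x : En n | ∑ j ∈ Finset.range (n+1), ssE n j x ≤ ∑ j ∈ Finset.range (n+1), ttE n j x} := by
    ext x; simp [DD, busyDelta, Set.mem_iInter]
  rw [this]
  exact (MeasurableSet.iInter fun i => MeasurableSet.iInter fun _ =>
    measurableSet_lt (h1 i) (h2 i)).inter (measurableSet_le (h2 n) (h1 n))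

lemma sum_ttE (n i : ℕ) (x : En n) :
    ∑ j ∈ Finset.range (i+1), ttE n j x = x.1 + TTn n i x.2.2.2 := by
  rw [Finset.sum_range_succ']; exact add_comm _ _

lemma sum_ssE (n i : ℕ) (x : En n) :
    ∑ j ∈ Finset.range (i+1), ssE n j x = x.2.1 + SSn n i x.2.2.1 x.2.2.2 := by
  rw [Finset.sum_range_succ']; exact add_comm _ _

lemma SSn_succ (n i : ℕ) (s : ℝ) (w : Gn n) :
    SSn n (i+1) s w = s + ∑ j ∈ Finset.range i, svalE n j w := by
  unfold SSn; rw [Finset.sum_range_succ']; exact add_comm _ _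

lemma memDD_iff (n : ℕ) (x : En n) : x ∈ DD n ↔ Cond n x.1 x.2.1 x.2.2.1 x.2.2.2 := by
  unfold DD busyDelta Cond
  simp only [Set.mem_setOf_eq, sum_ttE, sum_ssE]

lemma cond_shift (n : ℕ) (t u s : ℝ) (w : Gn n) :
    Cond n t (t + u) s w ↔ Cond n 0 u s w := by
  unfold Cond
  refine and_congr (forall₂_congr fun i hi => ?_) ?_ <;>
    constructor <;> intro h <;> linarith

lemma cond_pos (n : ℕ) (hn : 1 ≤ n) (u s : ℝ) (w : Gn n) (h : Cond n 0 u s w) : 0 < u := by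
  have := h.1 0 hn
  simp only [TTn, SSn, Finset.range_zero, Finset.sum_empty, add_zero] at this
  linarith

lemma cond_swap_aux {n : ℕ} (hn : 1 ≤ n) (a b : ℝ) (w : Gn n) (hb : 0 < b)
    (h : Cond n 0 a b w) : Cond n 0 b a w := by
  obtain ⟨n', rfl⟩ : ∃ m, n = m + 1 := ⟨n - 1, by omega⟩
  obtain ⟨h1, h2⟩ := h
  constructor
  · intro i hi
    cases i with
    | zero =>
      simp only [TTn, SSn, Finset.range_zero, Finset.sum_empty, add_zero]
      linarith
    | succ i' =>
      have := h1 (i'+1) hi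
      rw [SSn_succ] at this ⊢
      linarith
  · rw [SSn_succ] at h2 ⊢
    linarith


/-! ### random vectors -/

variable {Om : Type*} [MeasurableSpace Om]

def Wf (n : ℕ) (τ σ : ℕ → Om → ℝ) : Om → Gn n :=
  fun ω => (fun j : Fin n => τ (↑j + 1) ω, fun j : Fin n => σ (↑j + 2) ω)

def Xf (n : ℕ) (τ σ : ℕ → Om → ℝ) : Om → En n :=
  fun ω => (τ 0 ω, σ 0 ω, σ 1 ω, Wf n τ σ ω)

lemma measurable_Wf (n : ℕ) (τ σ : ℕ → Om → ℝ) (hτm : ∀ j, Measurable (τ j))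
    (hσm : ∀ j, Measurable (σ j)) : Measurable (Wf n τ σ) := by
  unfold Wf
  exact (measurable_pi_lambda _ fun j => hτm _).prodMk
    (measurable_pi_lambda _ fun j => hσm _)

lemma measurable_Xf (n : ℕ) (τ σ : ℕ → Om → ℝ) (hτm : ∀ j, Measurable (τ j))
    (hσm : ∀ j, Measurable (σ j)) : Measurable (Xf n τ σ) :=
  (hτm 0).prodMk ((hσm 0).prodMk ((hσm 1).prodMk (measurable_Wf n τ σ hτm hσm)))

lemma preimage_DD (n : ℕ) (hn : 1 ≤ n) (τ σ : ℕ → Om → ℝ) :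
    busyDelta τ σ n = Xf n τ σ ⁻¹' DD n := by
  have hterm_t : ∀ j ≤ n, ∀ ω, ttE n j (Xf n τ σ ω) = τ j ω := by
    intro j hj ω
    cases j with
    | zero => rfl
    | succ k =>
      show tvalE n k (Wf n τ σ ω) = τ (k+1) ω
      unfold tvalE Wf
      rw [dif_pos (by omega : k < n)]
  have hterm_s : ∀ j ≤ n, ∀ ω, ssE n j (Xf n τ σ ω) = σ j ω := by
    intro j hj ω
    cases j with
    | zero => rfl
    | succ k =>
      cases k with
      | zero => rfl
      | succ k' =>
        show svalE n k' (Wf n τ σ ω) = σ (k'+2) ω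
        unfold svalE Wf
        rw [dif_pos (by omega : k' < n)]
  have hsum_t : ∀ i ≤ n, ∀ ω, ∑ j ∈ Finset.range (i+1), ttE n j (Xf n τ σ ω)
      = ∑ j ∈ Finset.range (i+1), τ j ω := by
    intro i hi ω
    refine Finset.sum_congr rfl fun j hj => hterm_t j ?_ ω
    have := Finset.mem_range.mp hj; omega
  have hsum_s : ∀ i ≤ n, ∀ ω, ∑ j ∈ Finset.range (i+1), ssE n j (Xf n τ σ ω)
      = ∑ j ∈ Finset.range (i+1), σ j ω := by
    intro i hi ω
    refine Finset.sum_congr rfl fun j hj => hterm_s j ?_ ω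
    have := Finset.mem_range.mp hj; omega
  ext ω
  simp only [busyDelta, Set.mem_setOf_eq, Set.mem_preimage, DD]
  refine and_congr (forall₂_congr fun i hi => ?_) ?_
  · rw [hsum_t i (le_of_lt hi) ω, hsum_s i (le_of_lt hi) ω]
  · rw [hsum_t n le_rfl ω, hsum_s n le_rfl ω]

/-! ### index sets for independence -/

def idxT1 (n : ℕ) : Finset (ℕ ⊕ ℕ) :=
  ((Finset.range (n+2)).image Sum.inr) ∪ ((Finset.range n).image fun k => Sum.inl (k+1))

def idxT2 (n : ℕ) : Finset (ℕ ⊕ ℕ) :=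
  ((Finset.range (n+1)).image fun k => Sum.inr (k+1)) ∪
    ((Finset.range n).image fun k => Sum.inl (k+1))

def idxT3 (n : ℕ) : Finset (ℕ ⊕ ℕ) :=
  ((Finset.range n).image fun k => Sum.inr (k+2)) ∪
    ((Finset.range n).image fun k => Sum.inl (k+1))

lemma mem_idxT1_inr (n k : ℕ) (h : k < n + 2) : (Sum.inr k : ℕ ⊕ ℕ) ∈ idxT1 n :=
  Finset.mem_union_left _ (Finset.mem_image_of_mem _ (Finset.mem_range.mpr h))

lemma mem_idxT1_inl (n k : ℕ) (h : k < n) : (Sum.inl (k+1) : ℕ ⊕ ℕ) ∈ idxT1 n :=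
  Finset.mem_union_right _ (Finset.mem_image.mpr ⟨k, Finset.mem_range.mpr h, rfl⟩)

lemma mem_idxT2_inr (n k : ℕ) (h : k < n + 1) : (Sum.inr (k+1) : ℕ ⊕ ℕ) ∈ idxT2 n :=
  Finset.mem_union_left _ (Finset.mem_image.mpr ⟨k, Finset.mem_range.mpr h, rfl⟩)

lemma mem_idxT2_inl (n k : ℕ) (h : k < n) : (Sum.inl (k+1) : ℕ ⊕ ℕ) ∈ idxT2 n :=
  Finset.mem_union_right _ (Finset.mem_image.mpr ⟨k, Finset.mem_range.mpr h, rfl⟩)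

lemma mem_idxT3_inr (n k : ℕ) (h : k < n) : (Sum.inr (k+2) : ℕ ⊕ ℕ) ∈ idxT3 n :=
  Finset.mem_union_left _ (Finset.mem_image.mpr ⟨k, Finset.mem_range.mpr h, rfl⟩)

lemma mem_idxT3_inl (n k : ℕ) (h : k < n) : (Sum.inl (k+1) : ℕ ⊕ ℕ) ∈ idxT3 n :=
  Finset.mem_union_right _ (Finset.mem_image.mpr ⟨k, Finset.mem_range.mpr h, rfl⟩)

lemma disj1 (n : ℕ) : Disjoint ({Sum.inl 0} : Finset (ℕ ⊕ ℕ)) (idxT1 n) := by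
  rw [Finset.disjoint_singleton_left]
  simp [idxT1, Finset.mem_union, Finset.mem_image]

lemma disj2 (n : ℕ) : Disjoint ({Sum.inr 0} : Finset (ℕ ⊕ ℕ)) (idxT2 n) := by
  rw [Finset.disjoint_singleton_left]
  simp [idxT2, Finset.mem_union, Finset.mem_image]

lemma disj3 (n : ℕ) : Disjoint ({Sum.inr 1} : Finset (ℕ ⊕ ℕ)) (idxT3 n) := by
  rw [Finset.disjoint_singleton_left]
  simp [idxT3, Finset.mem_union, Finset.mem_image]

def sel (i0 : ℕ ⊕ ℕ) : ((i : ({i0} : Finset (ℕ ⊕ ℕ))) → ℝ) → ℝ :=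
  fun v => v ⟨i0, Finset.mem_singleton_self i0⟩

lemma measurable_sel (i0 : ℕ ⊕ ℕ) : Measurable (sel i0) := measurable_pi_apply _

def psi1 (n : ℕ) : ((i : (idxT1 n : Finset (ℕ ⊕ ℕ))) → ℝ) → ℝ × ℝ × Gn n :=
  fun v => (v ⟨Sum.inr 0, mem_idxT1_inr n 0 (by omega)⟩,
    v ⟨Sum.inr 1, mem_idxT1_inr n 1 (by omega)⟩,
    fun j : Fin n => v ⟨Sum.inl (↑j + 1), mem_idxT1_inl n ↑j j.isLt⟩,
    fun j : Fin n => v ⟨Sum.inr (↑j + 2), mem_idxT1_inr n (↑j + 2) (by omega)⟩)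

def psi2 (n : ℕ) : ((i : (idxT2 n : Finset (ℕ ⊕ ℕ))) → ℝ) → ℝ × Gn n :=
  fun v => (v ⟨Sum.inr 1, mem_idxT2_inr n 0 (by omega)⟩,
    fun j : Fin n => v ⟨Sum.inl (↑j + 1), mem_idxT2_inl n ↑j j.isLt⟩,
    fun j : Fin n => v ⟨Sum.inr (↑j + 1 + 1), mem_idxT2_inr n (↑j + 1) (by omega)⟩)

def psi3 (n : ℕ) : ((i : (idxT3 n : Finset (ℕ ⊕ ℕ))) → ℝ) → Gn n :=
  fun v => (fun j : Fin n => v ⟨Sum.inl (↑j + 1), mem_idxT3_inl n ↑j j.isLt⟩,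
    fun j : Fin n => v ⟨Sum.inr (↑j + 2), mem_idxT3_inr n ↑j j.isLt⟩)

lemma measurable_psi1 (n : ℕ) : Measurable (psi1 n) :=
  (measurable_pi_apply _).prodMk ((measurable_pi_apply _).prodMk
    ((measurable_pi_lambda _ fun j => measurable_pi_apply _).prodMk
      (measurable_pi_lambda _ fun j => measurable_pi_apply _)))

lemma measurable_psi2 (n : ℕ) : Measurable (psi2 n) :=
  (measurable_pi_apply _).prodMk
    ((measurable_pi_lambda _ fun j => measurable_pi_apply _).prodMk
      (measurable_pi_lambda _ fun j => measurable_pi_apply _))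

lemma measurable_psi3 (n : ℕ) : Measurable (psi3 n) :=
  (measurable_pi_lambda _ fun j => measurable_pi_apply _).prodMk
    (measurable_pi_lambda _ fun j => measurable_pi_apply _)


/-! ### geometry of the region -/

def PhiE (n : ℕ) : En n → En n := fun y => (y.1, y.1 + y.2.1, y.2.2)

def BB (n : ℕ) : Set (ℝ × (ℝ × Gn n)) := (fun q : ℝ × (ℝ × Gn n) => ((0:ℝ), q)) ⁻¹' DD n

def BBp (n : ℕ) : Set (ℝ × (ℝ × Gn n)) := BB n ∩ {q | 0 < q.2.1}

def swE (n : ℕ) : ℝ × (ℝ × Gn n) → ℝ × (ℝ × Gn n) := fun q => (q.2.1, q.1, q.2.2)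

lemma measurable_PhiE (n : ℕ) : Measurable (PhiE n) := by
  unfold PhiE; fun_prop

lemma measurable_swE (n : ℕ) : Measurable (swE n) := by
  unfold swE; fun_prop

lemma measurableSet_BB (n : ℕ) : MeasurableSet (BB n) :=
  (measurable_const.prodMk measurable_id) (measurableSet_DD n)

lemma measurableSet_BBp (n : ℕ) : MeasurableSet (BBp n) :=
  (measurableSet_BB n).inter
    (measurableSet_lt measurable_const (measurable_fst.comp measurable_snd))

lemma mem_BB_iff (n : ℕ) (q : ℝ × (ℝ × Gn n)) :
    q ∈ BB n ↔ Cond n 0 q.1 q.2.1 q.2.2 := memDD_iff n ((0:ℝ), q)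

lemma DD_subset (n : ℕ) (hn : 1 ≤ n) : DD n ⊆ {x : En n | x.1 < x.2.1} := by
  intro x hx
  have h := ((memDD_iff n x).mp hx).1 0 hn
  simp only [TTn, SSn, Finset.range_zero, Finset.sum_empty, add_zero] at h
  exact h

lemma preimage_PhiE (n : ℕ) : PhiE n ⁻¹' DD n = Set.univ ×ˢ BB n := by
  ext y
  have h1 : PhiE n y ∈ DD n ↔ Cond n y.1 (y.1 + y.2.1) y.2.2.1 y.2.2.2 :=
    memDD_iff n (PhiE n y)
  have h2 : y.2 ∈ BB n ↔ Cond n 0 y.2.1 y.2.2.1 y.2.2.2 := mem_BB_iff n y.2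
  simp only [Set.mem_preimage, Set.mem_prod, Set.mem_univ, true_and]
  rw [h1, cond_shift, h2]

lemma sw_preimage_BBp (n : ℕ) (hn : 1 ≤ n) : swE n ⁻¹' BBp n = BBp n := by
  ext q
  constructor
  · rintro ⟨hq, hu'⟩
    have hu : 0 < q.1 := hu'
    have hC : Cond n 0 q.2.1 q.1 q.2.2 := (mem_BB_iff n (swE n q)).mp hq
    have hC' : Cond n 0 q.1 q.2.1 q.2.2 := cond_swap_aux hn _ _ _ hu hC
    have hs : 0 < q.2.1 := cond_pos n hn _ _ _ hC
    exact ⟨(mem_BB_iff n q).mpr hC', hs⟩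
  · rintro ⟨hqB, hs'⟩
    have hs : 0 < q.2.1 := hs'
    have hC : Cond n 0 q.1 q.2.1 q.2.2 := (mem_BB_iff n q).mp hqB
    have hu : 0 < q.1 := cond_pos n hn _ _ _ hC
    have hC' : Cond n 0 q.2.1 q.1 q.2.2 := cond_swap_aux hn _ _ _ hs hC
    exact ⟨(mem_BB_iff n (swE n q)).mpr hC', hu⟩

/-! ### measure-level lemmas on the canonical space -/

lemma key1 (n : ℕ) {lam mu : ℝ} (hlam : 0 < lam) (hmu : 0 < mu)
    (Q2 : Measure (ℝ × Gn n)) [IsProbabilityMeasure Q2] :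
    (ENNReal.ofReal (lam / (lam + mu))) •
        (((expMeasure (lam + mu)).prod ((expMeasure mu).prod Q2)).map (PhiE n))
      = ((expMeasure lam).prod ((expMeasure mu).prod Q2)).restrict {x : En n | x.1 < x.2.1} := by
  have hlm : 0 < lam + mu := by linarith
  haveI : IsProbabilityMeasure (expMeasure lam) := isProbabilityMeasure_expMeasure hlam
  haveI : IsProbabilityMeasure (expMeasure mu) := isProbabilityMeasure_expMeasure hmu
  haveI : IsProbabilityMeasure (expMeasure (lam + mu)) := isProbabilityMeasure_expMeasure hlm
  set ea : ((ℝ × ℝ) × (ℝ × Gn n)) ≃ᵐ (ℝ × (ℝ × (ℝ × Gn n))) :=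
    MeasurableEquiv.prodAssoc with hea
  have hψm : Measurable (fun p : ℝ × ℝ => (p.1, p.1 + p.2)) := by fun_prop
  have hAm : MeasurableSet {x : En n | x.1 < x.2.1} :=
    measurableSet_lt measurable_fst (measurable_fst.comp measurable_snd)
  have hstep1 : (expMeasure (lam + mu)).prod ((expMeasure mu).prod Q2)
      = (((expMeasure (lam + mu)).prod (expMeasure mu)).prod Q2).map ea :=
    (measurePreserving_prodAssoc _ _ _).map_eq.symm
  have hcomm : PhiE n ∘ ⇑ea
      = ⇑ea ∘ (Prod.map (fun p : ℝ × ℝ => (p.1, p.1 + p.2)) (id : ℝ × Gn n → ℝ × Gn n)) := by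
    funext p; rfl
  have hpre : ⇑ea ⁻¹' {x : En n | x.1 < x.2.1}
      = {p : ℝ × ℝ | p.1 < p.2} ×ˢ (Set.univ : Set (ℝ × Gn n)) := by
    ext p
    constructor
    · intro hp; exact ⟨hp, Set.mem_univ _⟩
    · intro hp; exact hp.1
  calc (ENNReal.ofReal (lam / (lam + mu))) •
        (((expMeasure (lam + mu)).prod ((expMeasure mu).prod Q2)).map (PhiE n))
      = (ENNReal.ofReal (lam / (lam + mu))) •
          (((((expMeasure (lam + mu)).prod (expMeasure mu)).prod Q2).map ea).map (PhiE n)) := by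
        rw [← hstep1]
    _ = (ENNReal.ofReal (lam / (lam + mu))) •
          ((((expMeasure (lam + mu)).prod (expMeasure mu)).prod Q2).map (PhiE n ∘ ⇑ea)) := by
        rw [Measure.map_map (measurable_PhiE n) ea.measurable]
    _ = (ENNReal.ofReal (lam / (lam + mu))) •
          ((((expMeasure (lam + mu)).prod (expMeasure mu)).prod Q2).map
            (⇑ea ∘ (Prod.map (fun p : ℝ × ℝ => (p.1, p.1 + p.2)) id))) := by
        rw [hcomm]
    _ = (ENNReal.ofReal (lam / (lam + mu))) •
          (((((expMeasure (lam + mu)).prod (expMeasure mu)).prod Q2).map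
            (Prod.map (fun p : ℝ × ℝ => (p.1, p.1 + p.2)) id)).map ea) := by
        rw [Measure.map_map ea.measurable (hψm.prodMap measurable_id)]
    _ = (ENNReal.ofReal (lam / (lam + mu))) •
          (((((expMeasure (lam + mu)).prod (expMeasure mu)).map
            (fun p : ℝ × ℝ => (p.1, p.1 + p.2))).prod (Q2.map id)).map ea) := by
        rw [Measure.map_prod_map _ _ hψm measurable_id]
    _ = (ENNReal.ofReal (lam / (lam + mu))) •
          (((((expMeasure (lam + mu)).prod (expMeasure mu)).map
            (fun p : ℝ × ℝ => (p.1, p.1 + p.2))).prod Q2).map ea) := by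
        rw [Measure.map_id]
    _ = (((ENNReal.ofReal (lam / (lam + mu))) •
          (((expMeasure (lam + mu)).prod (expMeasure mu)).map
            (fun p : ℝ × ℝ => (p.1, p.1 + p.2)))).prod Q2).map ea := by
        rw [smul_prod'', Measure.map_smul]
    _ = (((((expMeasure lam).prod (expMeasure mu))).restrict {p : ℝ × ℝ | p.1 < p.2}).prod Q2).map
          ea := by rw [core2d hlam hmu]
    _ = (((((expMeasure lam).prod (expMeasure mu))).prod Q2).restrict
          ({p : ℝ × ℝ | p.1 < p.2} ×ˢ Set.univ)).map ea := by
        rw [Measure.restrict_prod_eq_prod_univ]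
    _ = ((((expMeasure lam).prod (expMeasure mu)).prod Q2).map ea).restrict
          {x : En n | x.1 < x.2.1} := by
        rw [Measure.restrict_map ea.measurable hAm, hpre]
    _ = ((expMeasure lam).prod ((expMeasure mu).prod Q2)).restrict {x : En n | x.1 < x.2.1} := by
        rw [(measurePreserving_prodAssoc _ _ _).map_eq]

lemma sw_measurePreserving (n : ℕ) {mu : ℝ} (hmu : 0 < mu)
    (κ : Measure (Gn n)) [IsProbabilityMeasure κ] :
    MeasurePreserving (swE n) ((expMeasure mu).prod ((expMeasure mu).prod κ))
      ((expMeasure mu).prod ((expMeasure mu).prod κ)) := by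
  haveI : IsProbabilityMeasure (expMeasure mu) := isProbabilityMeasure_expMeasure hmu
  set ea : ((ℝ × ℝ) × Gn n) ≃ᵐ (ℝ × (ℝ × Gn n)) := MeasurableEquiv.prodAssoc with hea
  have h1 : MeasurePreserving (⇑ea.symm) ((expMeasure mu).prod ((expMeasure mu).prod κ))
      (((expMeasure mu).prod (expMeasure mu)).prod κ) :=
    (measurePreserving_prodAssoc _ _ _).symm _
  have h2 : MeasurePreserving (Prod.map (Prod.swap : ℝ × ℝ → ℝ × ℝ) (id : Gn n → Gn n))
      (((expMeasure mu).prod (expMeasure mu)).prod κ)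
      (((expMeasure mu).prod (expMeasure mu)).prod κ) :=
    (Measure.measurePreserving_swap).prod (MeasurePreserving.id κ)
  have h3 := measurePreserving_prodAssoc (expMeasure mu) (expMeasure mu) κ
  have hcomp := (h3.comp h2).comp h1
  have heq : swE n = ⇑ea ∘ ((Prod.map (Prod.swap : ℝ × ℝ → ℝ × ℝ) (id : Gn n → Gn n)) ∘ ⇑ea.symm) := by
    funext q; rfl
  rw [heq]
  exact hcomp


lemma restrict_BB_eq_BBp (n : ℕ) {mu : ℝ} (hmu : 0 < mu)
    (κ : Measure (Gn n)) [IsProbabilityMeasure κ] :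
    ((expMeasure mu).prod ((expMeasure mu).prod κ)).restrict (BB n)
      = ((expMeasure mu).prod ((expMeasure mu).prod κ)).restrict (BBp n) := by
  haveI : IsProbabilityMeasure (expMeasure mu) := isProbabilityMeasure_expMeasure hmu
  have hnull : ((expMeasure mu).prod ((expMeasure mu).prod κ))
      {q : ℝ × (ℝ × Gn n) | q.2.1 ≤ 0} = 0 := by
    have hset : {q : ℝ × (ℝ × Gn n) | q.2.1 ≤ 0}
        = (Set.univ : Set ℝ) ×ˢ ((Set.Iic (0:ℝ)) ×ˢ (Set.univ : Set (Gn n))) := by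
      ext q; simp [Set.mem_prod]
    rw [hset, Measure.prod_prod, Measure.prod_prod, expMeasure_Iic_zero]
    simp
  refine Measure.restrict_congr_set (ae_eq_set.mpr ⟨measure_mono_null (fun q hq => ?_) hnull, ?_⟩)
  · by_contra h
    simp only [Set.mem_setOf_eq, not_le] at h
    exact hq.2 ⟨hq.1, h⟩
  · have he : BBp n \ BB n = ∅ := by rw [Set.diff_eq_empty]; exact Set.inter_subset_left
    rw [he]; simp

lemma marg_swap (n : ℕ) (hn : 1 ≤ n) {mu : ℝ} (hmu : 0 < mu)
    (κ : Measure (Gn n)) [IsProbabilityMeasure κ] :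
    ((((expMeasure mu).prod ((expMeasure mu).prod κ))).restrict (BBp n)).map
        (fun q : ℝ × (ℝ × Gn n) => q.2.1)
      = ((((expMeasure mu).prod ((expMeasure mu).prod κ))).restrict (BBp n)).map
          (fun q : ℝ × (ℝ × Gn n) => q.1) := by
  haveI : IsProbabilityMeasure (expMeasure mu) := isProbabilityMeasure_expMeasure hmu
  have hmp := sw_measurePreserving n hmu κ
  have hmap : (((expMeasure mu).prod ((expMeasure mu).prod κ)).restrict (BBp n)).map (swE n)
      = ((expMeasure mu).prod ((expMeasure mu).prod κ)).restrict (BBp n) := by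
    have h := Measure.restrict_map (μ := (expMeasure mu).prod ((expMeasure mu).prod κ))
      (f := swE n) hmp.measurable (measurableSet_BBp n)
    rw [hmp.map_eq, sw_preimage_BBp n hn] at h
    exact h.symm
  conv_rhs => rw [← hmap]
  rw [Measure.map_map measurable_fst (measurable_swE n)]
  rfl

lemma canonical_main (n : ℕ) (hn : 1 ≤ n) {lam mu : ℝ} (hlam : 0 < lam) (hmu : 0 < mu)
    (κ : Measure (Gn n)) [IsProbabilityMeasure κ] :
    ((((expMeasure lam).prod ((expMeasure mu).prod ((expMeasure mu).prod κ))).restrict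
        (DD n)).map (fun x : En n => x.2.1))
      = (((((expMeasure lam).prod ((expMeasure mu).prod ((expMeasure mu).prod κ))).restrict
            (DD n)).map (fun x : En n => x.2.2.1)).conv (expMeasure (lam + mu))) := by
  have hlm : 0 < lam + mu := by linarith
  haveI : IsProbabilityMeasure (expMeasure lam) := isProbabilityMeasure_expMeasure hlam
  haveI : IsProbabilityMeasure (expMeasure mu) := isProbabilityMeasure_expMeasure hmu
  haveI : IsProbabilityMeasure (expMeasure (lam + mu)) := isProbabilityMeasure_expMeasure hlm
  have hD := measurableSet_DD n
  have hsubset := DD_subset n hn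
  set ηB : Measure (ℝ × (ℝ × Gn n)) :=
    ((expMeasure mu).prod ((expMeasure mu).prod κ)).restrict (BBp n) with hηB
  haveI : IsFiniteMeasure ηB := by rw [hηB]; infer_instance
  have hres : ((expMeasure lam).prod ((expMeasure mu).prod ((expMeasure mu).prod κ))).restrict
      (DD n) = ((ENNReal.ofReal (lam / (lam + mu))) •
        (((expMeasure (lam + mu)).prod ((expMeasure mu).prod ((expMeasure mu).prod κ))).map
          (PhiE n))).restrict (DD n) := by
    rw [key1 n hlam hmu ((expMeasure mu).prod κ), Measure.restrict_restrict hD,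
      Set.inter_eq_left.mpr hsubset]
  have hrest2 : ((expMeasure (lam + mu)).prod
        ((expMeasure mu).prod ((expMeasure mu).prod κ))).restrict (PhiE n ⁻¹' DD n)
      = (expMeasure (lam + mu)).prod ηB := by
    rw [preimage_PhiE n, ← Measure.prod_restrict, Measure.restrict_univ,
      restrict_BB_eq_BBp n hmu κ]
  have hstep : ((expMeasure lam).prod ((expMeasure mu).prod ((expMeasure mu).prod κ))).restrict
      (DD n) = (ENNReal.ofReal (lam / (lam + mu))) •
        (((expMeasure (lam + mu)).prod ηB).map (PhiE n)) := by
    rw [hres, Measure.restrict_smul, Measure.restrict_map (measurable_PhiE n) hD, hrest2]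
  set ρ : Measure ℝ := ηB.map (fun q : ℝ × (ℝ × Gn n) => q.1) with hρ
  haveI : IsFiniteMeasure ρ := by rw [hρ]; exact Measure.isFiniteMeasure_map _ _
  have hL : (((expMeasure (lam + mu)).prod ηB).map (PhiE n)).map (fun x : En n => x.2.1)
      = (expMeasure (lam + mu)).conv ρ := by
    rw [Measure.map_map (g := fun x : En n => x.2.1) (f := PhiE n)
      (measurable_fst.comp measurable_snd) (measurable_PhiE n)]
    have h1 : ((expMeasure (lam + mu)).prod ηB).map
        (Prod.map (id : ℝ → ℝ) (fun q : ℝ × (ℝ × Gn n) => q.1))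
        = (expMeasure (lam + mu)).prod ρ := by
      rw [← Measure.map_prod_map _ _ measurable_id measurable_fst, Measure.map_id]
    have h2 : ((fun x : En n => x.2.1) ∘ PhiE n)
        = (fun p : ℝ × ℝ => p.1 + p.2) ∘
            (Prod.map (id : ℝ → ℝ) (fun q : ℝ × (ℝ × Gn n) => q.1)) := rfl
    rw [h2, ← Measure.map_map (g := fun p : ℝ × ℝ => p.1 + p.2) (measurable_fst.add measurable_snd)
      (measurable_id.prodMap measurable_fst), h1]
    rfl
  have hR : (((expMeasure (lam + mu)).prod ηB).map (PhiE n)).map (fun x : En n => x.2.2.1)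
      = ρ := by
    rw [Measure.map_map (g := fun x : En n => x.2.2.1) (f := PhiE n)
      (measurable_fst.comp (measurable_snd.comp measurable_snd)) (measurable_PhiE n)]
    have h2 : ((fun x : En n => x.2.2.1) ∘ PhiE n)
        = (fun q : ℝ × (ℝ × Gn n) => q.2.1) ∘ (Prod.snd : En n → ℝ × (ℝ × Gn n)) := rfl
    rw [h2, ← Measure.map_map (g := fun q : ℝ × (ℝ × Gn n) => q.2.1)
      (f := (Prod.snd : En n → ℝ × (ℝ × Gn n)))
      (measurable_fst.comp measurable_snd) measurable_snd, Measure.map_snd_prod]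
    simp only [measure_univ, one_smul]
    rw [hηB, hρ]
    exact marg_swap n hn hmu κ
  rw [hstep, Measure.map_smul, Measure.map_smul, hL, hR, Measure.conv_comm,
    ← conv_smul_left]

end BusyCondAux

open BusyCondAux in
/-- for `n ≥ 1`, `L[σ_0 | Δ_n] = L[σ_1 | Δ_n] ⋆ Exp(λ+μ)`. -/
theorem condLaw_first_eq_second_conv_exp
    {Ω : Type*} [MeasurableSpace Ω] (P : Measure Ω) [IsProbabilityMeasure P]
    (lam mu : ℝ) (hlam : 0 < lam) (hmu : 0 < mu)
    (τ σ : ℕ → Ω → ℝ)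
    (hτm : ∀ j, Measurable (τ j)) (hσm : ∀ j, Measurable (σ j))
    (hindep : iIndepFun (Sum.elim τ σ) P)
    (hτ : ∀ j, P.map (τ j) = expMeasure lam)
    (hσ : ∀ j, P.map (σ j) = expMeasure mu)
    (n : ℕ) (hn : 1 ≤ n) :
    (P[|busyDelta τ σ n]).map (σ 0)
      = ((P[|busyDelta τ σ n]).map (σ 1)).conv (expMeasure (lam + mu)) := by
  obtain ⟨n', rfl⟩ : ∃ m, n = m + 1 := ⟨n - 1, by omega⟩
  have hn1 : 1 ≤ n' + 1 := by omega
  have hlm : 0 < lam + mu := by linarith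
  haveI : IsProbabilityMeasure (expMeasure (lam + mu)) := isProbabilityMeasure_expMeasure hlm
  have hfm : ∀ i : ℕ ⊕ ℕ, Measurable (Sum.elim τ σ i) := by
    intro i
    cases i with
    | inl j => exact hτm j
    | inr j => exact hσm j
  have hWm : Measurable (Wf (n'+1) τ σ) := measurable_Wf _ τ σ hτm hσm
  have hXm : Measurable (Xf (n'+1) τ σ) := measurable_Xf _ τ σ hτm hσm
  have hX2m : Measurable (fun ω => (σ 1 ω, Wf (n'+1) τ σ ω)) := (hσm 1).prodMk hWm
  have hX1m : Measurable (fun ω => (σ 0 ω, σ 1 ω, Wf (n'+1) τ σ ω)) := (hσm 0).prodMk hX2m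
  have hI1 : IndepFun (τ 0) (fun ω => (σ 0 ω, σ 1 ω, Wf (n'+1) τ σ ω)) P :=
    (hindep.indepFun_finset {Sum.inl 0} (idxT1 (n'+1)) (disj1 _) hfm).comp
      (measurable_sel _) (measurable_psi1 _)
  have hI2 : IndepFun (σ 0) (fun ω => (σ 1 ω, Wf (n'+1) τ σ ω)) P :=
    (hindep.indepFun_finset {Sum.inr 0} (idxT2 (n'+1)) (disj2 _) hfm).comp
      (measurable_sel _) (measurable_psi2 _)
  have hI3 : IndepFun (σ 1) (Wf (n'+1) τ σ) P :=
    (hindep.indepFun_finset {Sum.inr 1} (idxT3 (n'+1)) (disj3 _) hfm).comp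
      (measurable_sel _) (measurable_psi3 _)
  haveI : IsProbabilityMeasure (P.map (Wf (n'+1) τ σ)) :=
    Measure.isProbabilityMeasure_map hWm.aemeasurable
  have e3 : P.map (fun ω => (σ 1 ω, Wf (n'+1) τ σ ω))
      = (P.map (σ 1)).prod (P.map (Wf (n'+1) τ σ)) :=
    (indepFun_iff_map_prod_eq_prod_map_map (hσm 1).aemeasurable hWm.aemeasurable).mp hI3
  have e2 : P.map (fun ω => (σ 0 ω, σ 1 ω, Wf (n'+1) τ σ ω))
      = (P.map (σ 0)).prod (P.map (fun ω => (σ 1 ω, Wf (n'+1) τ σ ω))) :=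
    (indepFun_iff_map_prod_eq_prod_map_map (hσm 0).aemeasurable hX2m.aemeasurable).mp hI2
  have e1 : P.map (Xf (n'+1) τ σ)
      = (P.map (τ 0)).prod (P.map (fun ω => (σ 0 ω, σ 1 ω, Wf (n'+1) τ σ ω))) :=
    (indepFun_iff_map_prod_eq_prod_map_map (hτm 0).aemeasurable hX1m.aemeasurable).mp hI1
  have hmX : P.map (Xf (n'+1) τ σ)
      = (expMeasure lam).prod ((expMeasure mu).prod
          ((expMeasure mu).prod (P.map (Wf (n'+1) τ σ)))) := by
    rw [e1, e2, e3, hτ 0, hσ 0, hσ 1]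
  have hD := measurableSet_DD (n'+1)
  have hpre := preimage_DD (n'+1) hn1 τ σ
  have hrestr : ∀ g : En (n'+1) → ℝ, Measurable g →
      (P.restrict (busyDelta τ σ (n'+1))).map (fun ω => g (Xf (n'+1) τ σ ω))
        = ((P.map (Xf (n'+1) τ σ)).restrict (DD (n'+1))).map g := by
    intro g hg
    rw [Measure.restrict_map hXm hD, ← hpre, Measure.map_map hg hXm]
    rfl
  have h0 : (P.restrict (busyDelta τ σ (n'+1))).map (σ 0)
      = ((P.map (Xf (n'+1) τ σ)).restrict (DD (n'+1))).map (fun x : En (n'+1) => x.2.1) :=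
    hrestr _ (measurable_fst.comp measurable_snd)
  have h1 : (P.restrict (busyDelta τ σ (n'+1))).map (σ 1)
      = ((P.map (Xf (n'+1) τ σ)).restrict (DD (n'+1))).map (fun x : En (n'+1) => x.2.2.1) :=
    hrestr _ (measurable_fst.comp (measurable_snd.comp measurable_snd))
  have hcanon := canonical_main (n'+1) hn1 hlam hmu (P.map (Wf (n'+1) τ σ))
  have hcd : P[|busyDelta τ σ (n'+1)]
      = (P (busyDelta τ σ (n'+1)))⁻¹ • P.restrict (busyDelta τ σ (n'+1)) := rfl
  haveI : IsFiniteMeasure (((P.map (Xf (n'+1) τ σ)).restrict (DD (n'+1))).map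
      (fun x : En (n'+1) => x.2.2.1)) := by
    rw [hmX]
    haveI : IsProbabilityMeasure ((expMeasure lam).prod ((expMeasure mu).prod
        ((expMeasure mu).prod (P.map (Wf (n'+1) τ σ))))) := by
      haveI : IsProbabilityMeasure (expMeasure lam) := isProbabilityMeasure_expMeasure hlam
      haveI : IsProbabilityMeasure (expMeasure mu) := isProbabilityMeasure_expMeasure hmu
      infer_instance
    exact Measure.isFiniteMeasure_map _ _
  rw [hcd, Measure.map_smul, Measure.map_smul, h0, h1, conv_smul_left, hmX, hcanon]
end

section
/- For every integer n ≥ 1, the polynomial identity 𝓡_n^{(0)}(z) = z · 𝓡_n^{(1)}(z) holds; equivalently, Σ_{π∈𝒟_n} z^{α_0(π)+1} = z · Σ_{π∈𝒟_n} z^{α_1(π)+1}. (This follows from an explicit involution on 𝒟_n exchanging the roles of the lines y = x and y = x − 2.) -/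
/-- A path of length `2n` is encoded by `w : Fin (2*n) → Bool`, where `true` stands for a step
`(1,1)` and `false` for a step `(1,-1)`. `upCount n w m` is the number of up-steps among the
first `m` steps; the height of the path after `m` steps is `2 * upCount n w m - m`. -/
def upCount (n : ℕ) (w : Fin (2 * n) → Bool) (m : ℕ) : ℕ :=
  (Finset.univ.filter (fun p : Fin (2 * n) => (p : ℕ) < m ∧ w p = true)).card

/-- `w` encodes a Dyck path of length `2n`: starts at `(0,0)`, ends at `(2n,0)`, stays weakly
above the x-axis. -/
def IsDyckPath (n : ℕ) (w : Fin (2 * n) → Bool) : Prop :=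
  (∀ m ≤ 2 * n, m ≤ 2 * upCount n w m) ∧ upCount n w (2 * n) = n

open Classical in
/-- The finite set `𝒟_n` of Dyck paths of length `2n`. -/
noncomputable def dyckPaths (n : ℕ) : Finset (Fin (2 * n) → Bool) :=
  Finset.univ.filter (fun w => IsDyckPath n w)

/-- `alpha n w j + 1` is the number of lattice points common to the path `w` and the line
`y = x - 2j`, i.e. the number of `m ∈ {0, …, 2n}` with height `2 * upCount n w m - m = m - 2j`,
equivalently `upCount n w m + j = m`. -/
def alpha (n : ℕ) (w : Fin (2 * n) → Bool) (j : ℕ) : ℕ :=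
  ((Finset.range (2 * n + 1)).filter (fun m => upCount n w m + j = m)).card - 1

/-- The Dyck polynomial `P_n(y_0, …, y_{n-1}) = Σ_{π ∈ 𝒟_n} Π_{i=0}^{n-1} y_i^{α_i(π)}/α_i(π)!`
(the argument `y : ℕ → ℝ` is only used through its first `n` values; `P_0 = 1`). -/
noncomputable def Ppoly (n : ℕ) (y : ℕ → ℝ) : ℝ :=
  ∑ w ∈ dyckPaths n, ∏ i ∈ Finset.range n, y i ^ alpha n w i / (alpha n w i).factorial

/-- The Dyck polynomial `R_n(y_0, …, y_{n-1}) = Σ_{π ∈ 𝒟_n} Π_{i=0}^{n-1} y_i^{α_i(π)}`. -/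
noncomputable def Rpoly (n : ℕ) (y : ℕ → ℝ) : ℝ :=
  ∑ w ∈ dyckPaths n, ∏ i ∈ Finset.range n, y i ^ alpha n w i

/-- The one-variable Dyck polynomial `𝓡_n^{(i)}(z) = Σ_{π ∈ 𝒟_n} z^{α_i(π)+1}`. -/
noncomputable def calR (n i : ℕ) (z : ℝ) : ℝ :=
  ∑ w ∈ dyckPaths n, z ^ (alpha n w i + 1)

/- ### auxiliary development -/


/-- Extension of `w` to all of `ℕ`, by `false`. -/
def Wext (n : ℕ) (w : Fin (2 * n) → Bool) (m : ℕ) : Bool :=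
  if h : m < 2 * n then w ⟨m, h⟩ else false

lemma wext_exists_false (n : ℕ) (w : Fin (2 * n) → Bool) : ∃ m, Wext n w m = false :=
  ⟨2 * n, by simp [Wext]⟩

noncomputable def d1 (n : ℕ) (w : Fin (2 * n) → Bool) : ℕ := Nat.find (wext_exists_false n w)

lemma d2_exists (n : ℕ) (w : Fin (2 * n) → Bool) :
    ∃ m, d1 n w < m ∧ Wext n w m = false :=
  ⟨max (2 * n) (d1 n w) + 1, by
    refine ⟨by omega, ?_⟩
    have : ¬ (max (2 * n) (d1 n w) + 1 < 2 * n) := by omega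
    simp [Wext, this]⟩

noncomputable def d2 (n : ℕ) (w : Fin (2 * n) → Bool) : ℕ := Nat.find (d2_exists n w)

lemma wext_d1 (n : ℕ) (w : Fin (2 * n) → Bool) : Wext n w (d1 n w) = false :=
  Nat.find_spec (wext_exists_false n w)

lemma wext_lt_d1 (n : ℕ) (w : Fin (2 * n) → Bool) {p : ℕ} (hp : p < d1 n w) :
    Wext n w p = true := by
  have := Nat.find_min (wext_exists_false n w) hp
  simpa using this

lemma d1_lt_d2 (n : ℕ) (w : Fin (2 * n) → Bool) : d1 n w < d2 n w :=
  (Nat.find_spec (d2_exists n w)).1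

lemma wext_d2 (n : ℕ) (w : Fin (2 * n) → Bool) : Wext n w (d2 n w) = false :=
  (Nat.find_spec (d2_exists n w)).2

lemma wext_between (n : ℕ) (w : Fin (2 * n) → Bool) {p : ℕ}
    (h1 : d1 n w < p) (h2 : p < d2 n w) : Wext n w p = true := by
  have := Nat.find_min (d2_exists n w) h2
  simp only [not_and] at this
  simpa using this h1

lemma wext_false_iff (n : ℕ) (w : Fin (2 * n) → Bool) {p : ℕ} (hp : p < d2 n w) :
    Wext n w p = false ↔ p = d1 n w := by
  constructor
  · intro h
    by_contra hne
    rcases Nat.lt_or_ge p (d1 n w) with hl | hg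
    · simp [wext_lt_d1 n w hl] at h
    · have : d1 n w < p := lt_of_le_of_ne hg (Ne.symm hne)
      simp [wext_between n w this hp] at h
  · rintro rfl; exact wext_d1 n w

lemma upCount_eq_card (n : ℕ) (w : Fin (2 * n) → Bool) (m : ℕ) (hm : m ≤ 2 * n) :
    upCount n w m = ((Finset.range m).filter (fun p => Wext n w p = true)).card := by
  unfold upCount
  refine Finset.card_bij (fun p _ => (p : ℕ)) ?_ ?_ ?_
  · intro p hp
    simp only [Finset.mem_filter, Finset.mem_univ, true_and] at hp
    simp only [Finset.mem_filter, Finset.mem_range]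
    refine ⟨hp.1, ?_⟩
    have h : (p : ℕ) < 2 * n := p.isLt
    simp [Wext, h, Fin.eta, hp.2]
  · intro a _ b _ h
    exact Fin.val_injective h
  · intro p hp
    simp only [Finset.mem_filter, Finset.mem_range] at hp
    have h : p < 2 * n := lt_of_lt_of_le hp.1 hm
    refine ⟨⟨p, h⟩, ?_, rfl⟩
    simp only [Finset.mem_filter, Finset.mem_univ, true_and]
    refine ⟨hp.1, ?_⟩
    have := hp.2
    simpa [Wext, h] using this

/-- the number of down-steps among the first `m` steps (extended) -/
noncomputable def Fcnt (n : ℕ) (w : Fin (2 * n) → Bool) (m : ℕ) : ℕ :=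
  ((Finset.range m).filter (fun p => Wext n w p = false)).card

lemma upCount_add_Fcnt (n : ℕ) (w : Fin (2 * n) → Bool) (m : ℕ) (hm : m ≤ 2 * n) :
    upCount n w m + Fcnt n w m = m := by
  rw [upCount_eq_card n w m hm, Fcnt]
  have : (Finset.range m).filter (fun p => Wext n w p = false)
      = (Finset.range m).filter (fun p => ¬ Wext n w p = true) := by
    apply Finset.filter_congr; intro p _; simp
  rw [this, Finset.card_filter_add_card_filter_not, Finset.card_range]

lemma Fcnt_eq_zero_iff (n : ℕ) (w : Fin (2 * n) → Bool) (m : ℕ) :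
    Fcnt n w m = 0 ↔ m ≤ d1 n w := by
  rw [Fcnt, Finset.card_eq_zero, Finset.filter_eq_empty_iff]
  constructor
  · intro h
    by_contra hlt
    push_neg at hlt
    exact absurd (wext_d1 n w) (by simpa using h (Finset.mem_range.2 hlt))
  · intro h p hp
    simp only [Finset.mem_range] at hp
    simp [wext_lt_d1 n w (lt_of_lt_of_le hp h)]

lemma falses_filter (n : ℕ) (w : Fin (2 * n) → Bool) {m : ℕ} (hm : m ≤ d2 n w) :
    (Finset.range m).filter (fun p => Wext n w p = false)
      = if d1 n w < m then {d1 n w} else ∅ := by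
  ext p
  simp only [Finset.mem_filter, Finset.mem_range]
  split_ifs with h
  · simp only [Finset.mem_singleton]
    constructor
    · rintro ⟨hpm, hf⟩
      exact (wext_false_iff n w (lt_of_lt_of_le hpm hm)).1 hf
    · rintro rfl; exact ⟨h, wext_d1 n w⟩
  · simp only [Finset.notMem_empty, iff_false, not_and]
    intro hpm hf
    have := (wext_false_iff n w (lt_of_lt_of_le hpm hm)).1 hf
    omega
  
lemma Fcnt_eq_one_iff (n : ℕ) (w : Fin (2 * n) → Bool) (m : ℕ) :
    Fcnt n w m = 1 ↔ d1 n w < m ∧ m ≤ d2 n w := by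
  constructor
  · intro h
    have h1 : d1 n w < m := by
      by_contra hle
      push_neg at hle
      rw [show Fcnt n w m = 0 from (Fcnt_eq_zero_iff n w m).2 hle] at h
      omega
    refine ⟨h1, ?_⟩
    by_contra hle
    push_neg at hle
    have hsub : ({d1 n w, d2 n w} : Finset ℕ) ⊆
        (Finset.range m).filter (fun p => Wext n w p = false) := by
      intro p hp
      simp only [Finset.mem_insert, Finset.mem_singleton] at hp
      rcases hp with rfl | rfl
      · exact Finset.mem_filter.2 ⟨Finset.mem_range.2 (lt_trans (d1_lt_d2 n w) hle),
          wext_d1 n w⟩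
      · exact Finset.mem_filter.2 ⟨Finset.mem_range.2 hle, wext_d2 n w⟩
    have h2 : ({d1 n w, d2 n w} : Finset ℕ).card = 2 := by
      rw [Finset.card_insert_of_notMem (by simp [Nat.ne_of_lt (d1_lt_d2 n w)]),
        Finset.card_singleton]
    have := Finset.card_le_card hsub
    rw [h2] at this
    unfold Fcnt at h
    omega
  · rintro ⟨h1, h2⟩
    rw [Fcnt, falses_filter n w h2, if_pos h1, Finset.card_singleton]

section dyck
variable {n : ℕ} {w : Fin (2 * n) → Bool} (hn : 1 ≤ n) (hw : IsDyckPath n w)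

include hn hw

lemma d1_lt_len : d1 n w < 2 * n := by
  by_contra h
  push_neg at h
  have hall : ∀ p : Fin (2 * n), w p = true := by
    intro p
    have := wext_lt_d1 n w (lt_of_lt_of_le p.isLt h)
    simpa [Wext, p.isLt, Fin.eta] using this
  have : upCount n w (2 * n) = 2 * n := by
    unfold upCount
    rw [Finset.filter_true_of_mem (fun p _ => ⟨p.isLt, hall p⟩), Finset.card_univ,
      Fintype.card_fin]
  rw [hw.2] at this
  omega

lemma d1_pos : 1 ≤ d1 n w := by
  have h1 : (1 : ℕ) ≤ 2 * upCount n w 1 := hw.1 1 (by omega)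
  have h2 : 1 ≤ upCount n w 1 := by omega
  rw [upCount_eq_card n w 1 (by omega)] at h2
  obtain ⟨p, hp⟩ := Finset.card_pos.1 h2
  simp only [Finset.mem_filter, Finset.mem_range, Nat.lt_one_iff] at hp
  obtain ⟨rfl, hp2⟩ := hp
  by_contra h
  push_neg at h
  have hd : d1 n w = 0 := by omega
  have hf := wext_d1 n w
  rw [hd] at hf
  rw [hf] at hp2
  exact Bool.false_ne_true hp2

lemma d2_le_len : d2 n w ≤ 2 * n := by
  apply Nat.find_le
  refine ⟨d1_lt_len hn hw, ?_⟩
  simp [Wext]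

lemma alpha_zero_eq : alpha n w 0 = d1 n w := by
  have hset : (Finset.range (2 * n + 1)).filter (fun m => upCount n w m + 0 = m)
      = Finset.range (d1 n w + 1) := by
    ext m
    simp only [Finset.mem_filter, Finset.mem_range, Nat.add_zero]
    constructor
    · rintro ⟨hm, hu⟩
      have hF := upCount_add_Fcnt n w m (by omega)
      have : Fcnt n w m = 0 := by omega
      have := (Fcnt_eq_zero_iff n w m).1 this
      omega
    · intro hm
      have hm' : m ≤ d1 n w := by omega
      have hmn : m ≤ 2 * n := le_trans hm' (le_of_lt (d1_lt_len hn hw))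
      have hF := upCount_add_Fcnt n w m hmn
      have : Fcnt n w m = 0 := (Fcnt_eq_zero_iff n w m).2 hm'
      omega
  rw [alpha, hset, Finset.card_range]
  omega

lemma alpha_one_eq : alpha n w 1 = d2 n w - d1 n w - 1 := by
  have hset : (Finset.range (2 * n + 1)).filter (fun m => upCount n w m + 1 = m)
      = Finset.Ioc (d1 n w) (d2 n w) := by
    ext m
    simp only [Finset.mem_filter, Finset.mem_range, Finset.mem_Ioc]
    constructor
    · rintro ⟨hm, hu⟩
      have hF := upCount_add_Fcnt n w m (by omega)
      have : Fcnt n w m = 1 := by omega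
      exact (Fcnt_eq_one_iff n w m).1 this
    · rintro ⟨h1, h2⟩
      have hmn : m ≤ 2 * n := le_trans h2 (d2_le_len hn hw)
      have hF := upCount_add_Fcnt n w m hmn
      have : Fcnt n w m = 1 := (Fcnt_eq_one_iff n w m).2 ⟨h1, h2⟩
      omega
  rw [alpha, hset, Nat.card_Ioc]

end dyck


/-- The involution: swap the first ascent (of length `a = d1`) and the second ascent
(of length `b - a - 1` where `b = d2`), keeping the rest of the path. -/
noncomputable def phi (n : ℕ) (w : Fin (2 * n) → Bool) : Fin (2 * n) → Bool :=
  fun p => if (p : ℕ) < d2 n w then decide ((p : ℕ) ≠ d2 n w - d1 n w) else w p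

lemma wext_phi (n : ℕ) (w : Fin (2 * n) → Bool) (hd2 : d2 n w ≤ 2 * n) (p : ℕ) :
    Wext n (phi n w) p
      = if p < d2 n w then decide (p ≠ d2 n w - d1 n w) else Wext n w p := by
  by_cases h : p < 2 * n
  · simp only [Wext, dif_pos h, phi]
  · have h2 : ¬ p < d2 n w := by omega
    simp only [Wext, dif_neg h, if_neg h2]

lemma Fcnt_split (n : ℕ) (w : Fin (2 * n) → Bool) {b m : ℕ} (hbm : b ≤ m) :
    Fcnt n w m
      = Fcnt n w b + ((Finset.Ico b m).filter (fun p => Wext n w p = false)).card := by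
  have h1 : Finset.range m = Finset.range b ∪ Finset.Ico b m := by
    rw [Finset.range_eq_Ico, Finset.range_eq_Ico]
    exact (Finset.Ico_union_Ico_eq_Ico (Nat.zero_le b) hbm).symm
  have h2 : Disjoint (Finset.range b) (Finset.Ico b m) := by
    rw [Finset.disjoint_left]
    intro p hp hq
    simp only [Finset.mem_range] at hp
    simp only [Finset.mem_Ico] at hq
    omega
  rw [Fcnt, h1, Finset.filter_union,
    Finset.card_union_of_disjoint (Finset.disjoint_filter_filter h2)]
  rfl

section dyck2
variable {n : ℕ} {w : Fin (2 * n) → Bool} (hn : 1 ≤ n) (hw : IsDyckPath n w)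

include hn hw

lemma d1_phi : d1 n (phi n w) = d2 n w - d1 n w := by
  have ha := d1_pos hn hw
  have hab := d1_lt_d2 n w
  have hb := d2_le_len hn hw
  rw [d1, Nat.find_eq_iff]
  constructor
  · rw [wext_phi n w hb, if_pos (by omega)]
    simp
  · intro p hp
    rw [wext_phi n w hb, if_pos (by omega)]
    simp only [decide_eq_false_iff_not, ne_eq, not_not, Bool.not_eq_false, decide_eq_true_eq]
    omega

lemma d2_phi : d2 n (phi n w) = d2 n w := by
  have ha := d1_pos hn hw
  have hab := d1_lt_d2 n w
  have hb := d2_le_len hn hw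
  rw [d2, Nat.find_eq_iff]
  refine ⟨⟨?_, ?_⟩, ?_⟩
  · rw [d1_phi hn hw]; omega
  · rw [wext_phi n w hb, if_neg (by omega)]
    exact wext_d2 n w
  · intro p hp
    rw [d1_phi hn hw]
    rintro ⟨h1, h2⟩
    rw [wext_phi n w hb, if_pos hp] at h2
    simp only [decide_eq_false_iff_not, ne_eq, not_not] at h2
    omega

lemma Fcnt_phi_d2 : Fcnt n (phi n w) (d2 n w) = 1 := by
  have ha := d1_pos hn hw
  have hab := d1_lt_d2 n w
  have hle : d2 n w ≤ d2 n (phi n w) := by rw [d2_phi hn hw]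
  rw [Fcnt, falses_filter n (phi n w) hle, if_pos (by rw [d1_phi hn hw]; omega)]
  exact Finset.card_singleton _

omit hn hw in
lemma Fcnt_w_d2 : Fcnt n w (d2 n w) = 1 := by
  have hab := d1_lt_d2 n w
  rw [Fcnt, falses_filter n w le_rfl, if_pos hab]
  exact Finset.card_singleton _

lemma Fcnt_phi_eq {m : ℕ} (hbm : d2 n w ≤ m) : Fcnt n (phi n w) m = Fcnt n w m := by
  have hb := d2_le_len hn hw
  rw [Fcnt_split n (phi n w) hbm, Fcnt_split n w hbm, Fcnt_phi_d2 hn hw, Fcnt_w_d2]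
  have heq : (Finset.Ico (d2 n w) m).filter (fun p => Wext n (phi n w) p = false)
      = (Finset.Ico (d2 n w) m).filter (fun p => Wext n w p = false) := by
    apply Finset.filter_congr
    intro p hp
    simp only [Finset.mem_Ico] at hp
    have h := wext_phi n w hb p
    rw [if_neg (by omega)] at h
    rw [h]
  rw [heq]

lemma upCount_phi_eq {m : ℕ} (hbm : d2 n w ≤ m) (hm : m ≤ 2 * n) :
    upCount n (phi n w) m = upCount n w m := by
  have h1 := upCount_add_Fcnt n (phi n w) m hm
  have h2 := upCount_add_Fcnt n w m hm
  have h3 := Fcnt_phi_eq hn hw hbm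
  omega

lemma phi_dyck : IsDyckPath n (phi n w) := by
  have ha := d1_pos hn hw
  have hab := d1_lt_d2 n w
  have hb := d2_le_len hn hw
  constructor
  · intro m hm
    rcases le_or_gt (d2 n w) m with h | h
    · rw [upCount_phi_eq hn hw h hm]
      exact hw.1 m hm
    · have hle : m ≤ d2 n (phi n w) := by rw [d2_phi hn hw]; omega
      have h1 := upCount_add_Fcnt n (phi n w) m hm
      have h2 : Fcnt n (phi n w) m
          = if d1 n (phi n w) < m then 1 else 0 := by
        rw [Fcnt, falses_filter n (phi n w) hle]
        split_ifs <;> simp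
      rw [d1_phi hn hw] at h2
      split_ifs at h2 with hd
      · omega
      · omega
  · rw [upCount_phi_eq hn hw hb le_rfl]
    exact hw.2

lemma phi_phi : phi n (phi n w) = w := by
  have ha := d1_pos hn hw
  have hab := d1_lt_d2 n w
  have hb := d2_le_len hn hw
  funext p
  have hp2n : (p : ℕ) < 2 * n := p.isLt
  show (if (p : ℕ) < d2 n (phi n w)
      then decide ((p : ℕ) ≠ d2 n (phi n w) - d1 n (phi n w)) else phi n w p) = w p
  rw [d2_phi hn hw, d1_phi hn hw]
  by_cases hp : (p : ℕ) < d2 n w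
  · rw [if_pos hp]
    have hsub : d2 n w - (d2 n w - d1 n w) = d1 n w := by omega
    rw [hsub]
    have hiff := wext_false_iff n w hp
    have hww : Wext n w (p : ℕ) = w p := by
      simp [Wext, hp2n]
    rw [hww] at hiff
    cases hwp : w p with
    | false => simp [hiff.1 hwp]
    | true =>
      have hne : (p : ℕ) ≠ d1 n w := by
        intro h
        rw [hwp] at hiff
        simp [h] at hiff
      simp [hne]
  · rw [if_neg hp]
    show (if (p : ℕ) < d2 n w then _ else w p) = w p
    rw [if_neg hp]

end dyck2

lemma mem_dyckPaths {n : ℕ} {w : Fin (2 * n) → Bool} :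
    w ∈ dyckPaths n ↔ IsDyckPath n w := by
  classical
  simp [dyckPaths]

/-- for `n ≥ 1`, `𝓡_n^{(0)}(z) = z · 𝓡_n^{(1)}(z)`. -/
theorem calR_zero_eq_z_mul_calR_one (n : ℕ) (hn : 1 ≤ n) (z : ℝ) :
    calR n 0 z = z * calR n 1 z := by
  unfold calR
  rw [Finset.mul_sum]
  refine Finset.sum_nbij' (i := fun w => phi n w) (j := fun w => phi n w) ?_ ?_ ?_ ?_ ?_
  · intro w hw
    exact mem_dyckPaths.2 (phi_dyck hn (mem_dyckPaths.1 hw))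
  · intro w hw
    exact mem_dyckPaths.2 (phi_dyck hn (mem_dyckPaths.1 hw))
  · intro w hw
    exact phi_phi hn (mem_dyckPaths.1 hw)
  · intro w hw
    exact phi_phi hn (mem_dyckPaths.1 hw)
  · intro w hw
    have hw' := mem_dyckPaths.1 hw
    have ha := d1_pos hn hw'
    have hab := d1_lt_d2 n w
    rw [alpha_zero_eq hn hw', alpha_one_eq hn (phi_dyck hn hw'), d1_phi hn hw',
      d2_phi hn hw']
    have he : d2 n w - (d2 n w - d1 n w) - 1 + 1 = d1 n w := by omega
    rw [he, pow_succ, mul_comm]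
end

section
/- For every integer n ≥ 1 and all real numbers y_0,…,y_{n−1} ≥ 0, P_n(y_0,…,y_{n−1}) = ∫_{y_1}^{y_0+y_1} P_{n−1}(y, y_2,…,y_{n−1}) dy (for n = 1 the integrand is P_0 = 1 and y_1 may be taken to be 0, giving P_1(y_0) = y_0). -/
/-! ### Basic counting machinery -/

/-- Number of down-steps among the first `m` steps. -/
def dnCount (n : ℕ) (w : Fin (2 * n) → Bool) (m : ℕ) : ℕ :=
  (Finset.univ.filter (fun p : Fin (2 * n) => (p : ℕ) < m ∧ w p = false)).card

lemma upCount_zero (n : ℕ) (w : Fin (2 * n) → Bool) : upCount n w 0 = 0 := by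
  simp [upCount]

lemma dnCount_zero (n : ℕ) (w : Fin (2 * n) → Bool) : dnCount n w 0 = 0 := by
  simp [dnCount]

lemma upCount_succ (n : ℕ) (w : Fin (2 * n) → Bool) (m : ℕ) (hm : m < 2 * n) :
    upCount n w (m + 1) = upCount n w m + (if w ⟨m, hm⟩ = true then 1 else 0) := by
  classical
  unfold upCount
  by_cases h : w ⟨m, hm⟩ = true
  · rw [if_pos h]
    have : (Finset.univ.filter (fun p : Fin (2 * n) => (p : ℕ) < m + 1 ∧ w p = true)) =
        insert ⟨m, hm⟩ (Finset.univ.filter (fun p : Fin (2 * n) => (p : ℕ) < m ∧ w p = true)) := by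
      ext p
      simp only [Finset.mem_filter, Finset.mem_univ, true_and, Finset.mem_insert]
      constructor
      · rintro ⟨h1, h2⟩
        rcases Nat.lt_succ_iff_lt_or_eq.1 h1 with h1 | h1
        · exact Or.inr ⟨h1, h2⟩
        · exact Or.inl (Fin.ext h1)
      · rintro (rfl | ⟨h1, h2⟩)
        · exact ⟨Nat.lt_succ_self m, h⟩
        · exact ⟨Nat.lt_succ_of_lt h1, h2⟩
    rw [this, Finset.card_insert_of_notMem (by simp)]
  · rw [if_neg h]
    have : (Finset.univ.filter (fun p : Fin (2 * n) => (p : ℕ) < m + 1 ∧ w p = true)) =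
        (Finset.univ.filter (fun p : Fin (2 * n) => (p : ℕ) < m ∧ w p = true)) := by
      ext p
      simp only [Finset.mem_filter, Finset.mem_univ, true_and]
      constructor
      · rintro ⟨h1, h2⟩
        rcases Nat.lt_succ_iff_lt_or_eq.1 h1 with h1 | h1
        · exact ⟨h1, h2⟩
        · exact absurd (by rwa [show p = ⟨m, hm⟩ from Fin.ext h1] at h2) h
      · rintro ⟨h1, h2⟩; exact ⟨Nat.lt_succ_of_lt h1, h2⟩
    rw [this, Nat.add_zero]

lemma dnCount_succ (n : ℕ) (w : Fin (2 * n) → Bool) (m : ℕ) (hm : m < 2 * n) :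
    dnCount n w (m + 1) = dnCount n w m + (if w ⟨m, hm⟩ = false then 1 else 0) := by
  classical
  unfold dnCount
  by_cases h : w ⟨m, hm⟩ = false
  · rw [if_pos h]
    have : (Finset.univ.filter (fun p : Fin (2 * n) => (p : ℕ) < m + 1 ∧ w p = false)) =
        insert ⟨m, hm⟩ (Finset.univ.filter (fun p : Fin (2 * n) => (p : ℕ) < m ∧ w p = false)) := by
      ext p
      simp only [Finset.mem_filter, Finset.mem_univ, true_and, Finset.mem_insert]
      constructor
      · rintro ⟨h1, h2⟩
        rcases Nat.lt_succ_iff_lt_or_eq.1 h1 with h1 | h1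
        · exact Or.inr ⟨h1, h2⟩
        · exact Or.inl (Fin.ext h1)
      · rintro (rfl | ⟨h1, h2⟩)
        · exact ⟨Nat.lt_succ_self m, h⟩
        · exact ⟨Nat.lt_succ_of_lt h1, h2⟩
    rw [this, Finset.card_insert_of_notMem (by simp)]
  · rw [if_neg h]
    have : (Finset.univ.filter (fun p : Fin (2 * n) => (p : ℕ) < m + 1 ∧ w p = false)) =
        (Finset.univ.filter (fun p : Fin (2 * n) => (p : ℕ) < m ∧ w p = false)) := by
      ext p
      simp only [Finset.mem_filter, Finset.mem_univ, true_and]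
      constructor
      · rintro ⟨h1, h2⟩
        rcases Nat.lt_succ_iff_lt_or_eq.1 h1 with h1 | h1
        · exact ⟨h1, h2⟩
        · exact absurd (by rwa [show p = ⟨m, hm⟩ from Fin.ext h1] at h2) h
      · rintro ⟨h1, h2⟩; exact ⟨Nat.lt_succ_of_lt h1, h2⟩
    rw [this, Nat.add_zero]

lemma up_add_dn (n : ℕ) (w : Fin (2 * n) → Bool) : ∀ m ≤ 2 * n,
    upCount n w m + dnCount n w m = m := by
  intro m
  induction m with
  | zero => intro _; rw [upCount_zero, dnCount_zero]
  | succ m ih =>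
    intro hm
    have hm' : m < 2 * n := hm
    rw [upCount_succ n w m hm', dnCount_succ n w m hm']
    have := ih (le_of_lt hm')
    by_cases h : w ⟨m, hm'⟩ = true
    · simp [h]; omega
    · simp [h]; omega

lemma dnCount_mono (n : ℕ) (w : Fin (2 * n) → Bool) {m m' : ℕ} (h : m ≤ m') :
    dnCount n w m ≤ dnCount n w m' := by
  apply Finset.card_le_card
  intro p hp
  simp only [Finset.mem_filter, Finset.mem_univ, true_and] at *
  exact ⟨lt_of_lt_of_le hp.1 h, hp.2⟩

lemma dnCount_le_top (n : ℕ) (w : Fin (2 * n) → Bool) (m : ℕ) :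
    dnCount n w m ≤ dnCount n w (2 * n) := by
  apply Finset.card_le_card
  intro p hp
  simp only [Finset.mem_filter, Finset.mem_univ, true_and] at *
  exact ⟨p.isLt, hp.2⟩

lemma dnCount_succ_le (n : ℕ) (w : Fin (2 * n) → Bool) (m : ℕ) (hm : m < 2 * n) :
    dnCount n w (m + 1) ≤ dnCount n w m + 1 := by
  rw [dnCount_succ n w m hm]
  split <;> omega

/-! ### Compositions -/

/-- Partial sums. -/
def psum (a : ℕ → ℕ) (k : ℕ) : ℕ := ∑ i ∈ Finset.range k, a i

/-- `a` is the sequence of `alpha`s of a Dyck path of length `2n`. -/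
def IsComp (n : ℕ) (a : ℕ → ℕ) : Prop :=
  (∀ i, n ≤ i → a i = 0) ∧ (∀ k ≤ n, k ≤ psum a k) ∧ psum a n = n

/-- Position of the `(k+1)`-st down-step in the path determined by `a`. -/
def dpos (a : ℕ → ℕ) (k : ℕ) : ℕ := psum a (k + 1) + k

/-- The path determined by the composition `a`. -/
def wcomp (n : ℕ) (a : ℕ → ℕ) : Fin (2 * n) → Bool :=
  fun p => decide (∀ k < n, (p : ℕ) ≠ dpos a k)

lemma psum_mono (a : ℕ → ℕ) {k k' : ℕ} (h : k ≤ k') : psum a k ≤ psum a k' :=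
  Finset.sum_le_sum_of_subset (Finset.range_subset_range.2 h)

lemma psum_succ (a : ℕ → ℕ) (k : ℕ) : psum a (k + 1) = psum a k + a k :=
  Finset.sum_range_succ a k

lemma exists_big_of_card (S : Finset ℕ) (j : ℕ) (hS : S.card = j) (hj : 1 ≤ j) :
    ∃ k ∈ S, j - 1 ≤ k := by
  by_contra hcon
  push_neg at hcon
  have : S ⊆ Finset.range (j - 1) := by
    intro k hk
    exact Finset.mem_range.2 (hcon k hk)
  have := Finset.card_le_card this
  rw [hS, Finset.card_range] at this
  omega

lemma alpha_eq_dn (n : ℕ) (w : Fin (2 * n) → Bool) (j : ℕ) :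
    alpha n w j =
      ((Finset.range (2 * n + 1)).filter (fun m => dnCount n w m = j)).card - 1 := by
  unfold alpha
  congr 2
  apply Finset.filter_congr
  intro m hm
  have hm' : m ≤ 2 * n := by
    have := Finset.mem_range.1 hm; omega
  have := up_add_dn n w m hm'
  constructor
  · intro h; omega
  · intro h; omega

section Comp

variable {n : ℕ} {a : ℕ → ℕ} (h : IsComp n a)
include h

lemma psum_le : ∀ k, psum a k ≤ n := by
  intro k
  rcases le_or_gt k n with hk | hk
  · exact le_trans (psum_mono a hk) (le_of_eq h.2.2)
  · have : psum a k = psum a n := by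
      rw [eq_comm]
      unfold psum
      apply Finset.sum_subset (Finset.range_subset_range.2 (le_of_lt hk))
      intro x hx hnx
      exact h.1 x (by simp only [Finset.mem_range] at hnx ⊢; omega)
    rw [this]; exact le_of_eq h.2.2

omit h in
lemma dpos_strictMono : StrictMono (dpos a) := by
  apply strictMono_nat_of_lt_succ
  intro k
  have h2 : psum a (k + 1) ≤ psum a (k + 1 + 1) := psum_mono a (by omega)
  unfold dpos
  omega

lemma dpos_lt (k : ℕ) (hk : k < n) : dpos a k < 2 * n := by
  have h1 := psum_le h (k + 1)
  unfold dpos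
  omega

omit h in
lemma wcomp_false_iff (p : Fin (2 * n)) :
    wcomp n a p = false ↔ ∃ k < n, (p : ℕ) = dpos a k := by
  unfold wcomp
  rw [decide_eq_false_iff_not]
  push_neg
  rfl

omit h in
lemma wcomp_true_iff (p : Fin (2 * n)) :
    wcomp n a p = true ↔ ∀ k < n, (p : ℕ) ≠ dpos a k := by
  unfold wcomp
  rw [decide_eq_true_eq]

omit h in
lemma dn_wcomp : ∀ m ≤ 2 * n,
    dnCount n (wcomp n a) m = ((Finset.range n).filter (fun k => dpos a k < m)).card := by
  intro m
  induction m with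
  | zero =>
    intro _
    rw [dnCount_zero]
    rw [eq_comm, Finset.card_eq_zero, Finset.filter_eq_empty_iff]
    intro k _; omega
  | succ m ih =>
    intro hm
    have hm' : m < 2 * n := hm
    rw [dnCount_succ n (wcomp n a) m hm', ih (le_of_lt hm')]
    by_cases hex : ∃ k < n, m = dpos a k
    · obtain ⟨k0, hk0n, hk0⟩ := hex
      have hw : wcomp n a ⟨m, hm'⟩ = false := by
        rw [wcomp_false_iff]
        exact ⟨k0, hk0n, hk0⟩
      rw [hw]
      have : (Finset.range n).filter (fun k => dpos a k < m + 1) =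
          insert k0 ((Finset.range n).filter (fun k => dpos a k < m)) := by
        ext k
        simp only [Finset.mem_filter, Finset.mem_range, Finset.mem_insert]
        constructor
        · rintro ⟨hkn, hkm⟩
          rcases lt_or_eq_of_le (Nat.lt_succ_iff.1 hkm) with h1 | h1
          · exact Or.inr ⟨hkn, h1⟩
          · exact Or.inl (dpos_strictMono.injective (h1.trans hk0))
        · rintro (rfl | ⟨hkn, hkm⟩)
          · exact ⟨hk0n, by omega⟩
          · exact ⟨hkn, by omega⟩
      rw [this, Finset.card_insert_of_notMem (by simp only [Finset.mem_filter]; omega)]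
      simp
    · have hw : wcomp n a ⟨m, hm'⟩ = true := by
        rw [wcomp_true_iff]
        intro k hk hke
        exact hex ⟨k, hk, hke⟩
      rw [hw]
      have : (Finset.range n).filter (fun k => dpos a k < m + 1) =
          (Finset.range n).filter (fun k => dpos a k < m) := by
        ext k
        simp only [Finset.mem_filter, Finset.mem_range]
        constructor
        · rintro ⟨hkn, hkm⟩
          refine ⟨hkn, ?_⟩
          rcases lt_or_eq_of_le (Nat.lt_succ_iff.1 hkm) with h1 | h1
          · exact h1
          · exact absurd ⟨k, hkn, h1.symm⟩ hex
        · rintro ⟨hkn, hkm⟩; exact ⟨hkn, by omega⟩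
      rw [this]
      simp

lemma dn_wcomp_top : dnCount n (wcomp n a) (2 * n) = n := by
  rw [dn_wcomp _ (le_refl _)]
  have : (Finset.range n).filter (fun k => dpos a k < 2 * n) = Finset.range n := by
    apply Finset.filter_true_of_mem
    intro k hk
    exact dpos_lt h k (Finset.mem_range.1 hk)
  rw [this, Finset.card_range]

lemma dn_le_of_le {m : ℕ} (hm : m ≤ 2 * n) : dnCount n (wcomp n a) m ≤ n := by
  rw [dn_wcomp _ hm]
  calc ((Finset.range n).filter (fun k => dpos a k < m)).card
      ≤ (Finset.range n).card := Finset.card_le_card (Finset.filter_subset _ _)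
    _ = n := Finset.card_range n

lemma two_dn_le {m : ℕ} (hm : m ≤ 2 * n) : 2 * dnCount n (wcomp n a) m ≤ m := by
  rw [dn_wcomp _ hm]
  set S := (Finset.range n).filter (fun k => dpos a k < m) with hS
  rcases Nat.eq_zero_or_pos S.card with h0 | h0
  · omega
  · obtain ⟨k, hkS, hk⟩ := exists_big_of_card S S.card rfl h0
    simp only [hS, Finset.mem_filter, Finset.mem_range] at hkS
    have h1 : dpos a (S.card - 1) ≤ dpos a k := dpos_strictMono.monotone hk
    have hcn : S.card ≤ n := by
      calc S.card ≤ (Finset.range n).card := Finset.card_le_card (Finset.filter_subset _ _)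
        _ = n := Finset.card_range n
    have h2 : S.card - 1 + 1 ≤ psum a (S.card - 1 + 1) := h.2.1 _ (by omega)
    have h3 : dpos a (S.card - 1) = psum a (S.card - 1 + 1) + (S.card - 1) := rfl
    omega

lemma isDyck_wcomp : IsDyckPath n (wcomp n a) := by
  constructor
  · intro m hm
    have h1 := two_dn_le h hm
    have h2 := up_add_dn n (wcomp n a) m hm
    omega
  · have h1 := dn_wcomp_top h
    have h2 := up_add_dn n (wcomp n a) (2 * n) (le_refl _)
    omega

lemma alpha_wcomp (j : ℕ) : alpha n (wcomp n a) j = a j := by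
  rw [alpha_eq_dn]
  rcases le_or_gt j n with hj | hj
  · -- the filter set is `Icc (psum a j + j) (psum a (j+1) + j)`
    have hset : (Finset.range (2 * n + 1)).filter (fun m => dnCount n (wcomp n a) m = j) =
        Finset.Icc (psum a j + j) (psum a (j + 1) + j) := by
      ext m
      simp only [Finset.mem_filter, Finset.mem_range, Finset.mem_Icc]
      constructor
      · rintro ⟨hm, hdn⟩
        have hm' : m ≤ 2 * n := by omega
        rw [dn_wcomp _ hm'] at hdn
        set S := (Finset.range n).filter (fun k => dpos a k < m) with hS
        constructor
        · -- lower bound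
          rcases Nat.eq_zero_or_pos j with rfl | hj0
          · simp only [psum, Finset.range_zero, Finset.sum_empty]
            omega
          · obtain ⟨k, hkS, hk⟩ := exists_big_of_card S j hdn hj0
            simp only [hS, Finset.mem_filter, Finset.mem_range] at hkS
            have h1 : dpos a (j - 1) ≤ dpos a k := dpos_strictMono.monotone hk
            have h2 : psum a (j - 1 + 1) = psum a j := by congr 1; omega
            have h3 : dpos a (j - 1) = psum a j + (j - 1) := by
              show psum a (j - 1 + 1) + (j - 1) = _
              rw [h2]
            omega
        · -- upper bound
          rcases lt_or_eq_of_le hj with hjn | rfl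
          · by_contra hcon
            push_neg at hcon
            have hsub : Finset.range (j + 1) ⊆ S := by
              intro k hk
              simp only [Finset.mem_range] at hk
              simp only [hS, Finset.mem_filter, Finset.mem_range]
              refine ⟨by omega, ?_⟩
              have : dpos a k ≤ dpos a j := dpos_strictMono.monotone (by omega)
              unfold dpos at this ⊢
              omega
            have := Finset.card_le_card hsub
            rw [Finset.card_range, hdn] at this
            omega
          · have hq1 : psum a j ≤ psum a (j + 1) := psum_mono a (by omega)
            have hq2 := h.2.2
            omega
      · rintro ⟨hlo, hhi⟩
        have hple := psum_le h (j + 1)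
        have hm' : m ≤ 2 * n := by omega
        refine ⟨by omega, ?_⟩
        rw [dn_wcomp _ hm']
        have : (Finset.range n).filter (fun k => dpos a k < m) =
            (Finset.range n).filter (fun k => k < j) := by
          apply Finset.filter_congr
          intro k hk
          simp only [Finset.mem_range] at hk
          constructor
          · intro hdk
            by_contra hc
            push_neg at hc
            have : dpos a j ≤ dpos a k := dpos_strictMono.monotone hc
            unfold dpos at this hdk
            omega
          · intro hkj
            have h1 : dpos a k ≤ dpos a (j - 1) := dpos_strictMono.monotone (by omega)
            have h2 : psum a (j - 1 + 1) = psum a j := by congr 1; omega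
            unfold dpos at h1 ⊢
            omega
        rw [this]
        have : (Finset.range n).filter (fun k => k < j) = Finset.range j := by
          ext k
          simp only [Finset.mem_filter, Finset.mem_range]
          constructor
          · rintro ⟨_, h2⟩; exact h2
          · intro hk
            refine ⟨?_, hk⟩
            -- k < j ≤ n; but if j = n need k < n too
            omega
        rw [this, Finset.card_range]
    rw [hset, Nat.card_Icc]
    have := psum_succ a j
    have := psum_mono a (Nat.le_succ j)
    omega
  · -- j > n : both sides are 0
    have hset : (Finset.range (2 * n + 1)).filter (fun m => dnCount n (wcomp n a) m = j) =
        ∅ := by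
      rw [Finset.filter_eq_empty_iff]
      intro m hm
      have := dn_le_of_le h (show m ≤ 2 * n by have := Finset.mem_range.1 hm; omega)
      omega
    rw [hset, h.1 j (by omega)]
    simp

end Comp

/-! ### From Dyck paths to compositions -/

/-- The set of times at which the path is on the line `y = x - 2j`. -/
def Aset (n : ℕ) (w : Fin (2 * n) → Bool) (j : ℕ) : Finset ℕ :=
  (Finset.range (2 * n + 1)).filter (fun m => dnCount n w m = j)

lemma alpha_eq_Aset (n : ℕ) (w : Fin (2 * n) → Bool) (j : ℕ) :
    alpha n w j = (Aset n w j).card - 1 := alpha_eq_dn n w j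

lemma mem_Aset (n : ℕ) (w : Fin (2 * n) → Bool) (j m : ℕ) :
    m ∈ Aset n w j ↔ m ≤ 2 * n ∧ dnCount n w m = j := by
  simp only [Aset, Finset.mem_filter, Finset.mem_range]
  omega

lemma Aset_eq_Icc (n : ℕ) (w : Fin (2 * n) → Bool) (j : ℕ)
    (hne : (Aset n w j).Nonempty) :
    Aset n w j =
      Finset.Icc ((Aset n w j).min' hne) ((Aset n w j).min' hne + alpha n w j) := by
  set lo := (Aset n w j).min' hne with hlodef
  set hi := (Aset n w j).max' hne with hhidef
  have hIcc : Aset n w j = Finset.Icc lo hi := by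
    ext m
    rw [Finset.mem_Icc]
    constructor
    · intro hm
      exact ⟨Finset.min'_le _ _ hm, Finset.le_max' _ _ hm⟩
    · rintro ⟨h1, h2⟩
      have hmin := (mem_Aset n w j _).1 (Finset.min'_mem _ hne)
      have hmax := (mem_Aset n w j _).1 (Finset.max'_mem _ hne)
      rw [← hlodef] at hmin
      rw [← hhidef] at hmax
      rw [mem_Aset]
      refine ⟨by omega, ?_⟩
      have l1 : dnCount n w lo ≤ dnCount n w m := dnCount_mono n w h1
      have l2 : dnCount n w m ≤ dnCount n w hi := dnCount_mono n w h2
      omega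
  have hle : lo ≤ hi := Finset.min'_le _ _ (Finset.max'_mem _ hne)
  have hcard : (Aset n w j).card = hi + 1 - lo := by rw [hIcc, Nat.card_Icc]
  have halpha : alpha n w j = hi - lo := by rw [alpha_eq_Aset, hcard]; omega
  rw [hIcc]
  congr 1
  omega

section Dyck

variable {n : ℕ} {w : Fin (2 * n) → Bool} (hw : IsDyckPath n w)
include hw

lemma dn_top : dnCount n w (2 * n) = n := by
  have := up_add_dn n w (2 * n) (le_refl _)
  have := hw.2
  omega

lemma Aset_nonempty (j : ℕ) (hj : j ≤ n) : (Aset n w j).Nonempty := by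
  have hivt : ∀ m, m ≤ 2 * n → ∀ j ≤ dnCount n w m, ∃ m' ≤ m, dnCount n w m' = j := by
    intro m
    induction m with
    | zero =>
      intro _ j hj
      rw [dnCount_zero] at hj
      exact ⟨0, le_refl _, by rw [dnCount_zero]; omega⟩
    | succ m ih =>
      intro hm j hj
      have hm' : m < 2 * n := hm
      by_cases hcase : j ≤ dnCount n w m
      · obtain ⟨m', hm'le, hm'eq⟩ := ih (by omega) j hcase
        exact ⟨m', by omega, hm'eq⟩
      · refine ⟨m + 1, le_refl _, ?_⟩
        have := dnCount_succ n w m hm'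
        have h2 : dnCount n w (m + 1) ≤ dnCount n w m + 1 := by rw [this]; split <;> omega
        omega
  obtain ⟨m', hm'le, hm'eq⟩ := hivt (2 * n) (le_refl _) j (by rw [dn_top hw]; exact hj)
  exact ⟨m', (mem_Aset n w j m').2 ⟨hm'le, hm'eq⟩⟩

/-- The alpha-sequence of a Dyck path. -/
lemma Aset_structure : ∀ j ≤ n,
    Aset n w j = Finset.Icc (psum (alpha n w) j + j) (psum (alpha n w) j + j + alpha n w j)
      ∧ (j < n → ∀ (hlt : psum (alpha n w) j + j + alpha n w j < 2 * n),
          w ⟨psum (alpha n w) j + j + alpha n w j, hlt⟩ = false) := by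
  have key : ∀ j, j ≤ n → (hprev : Aset n w j = Finset.Icc (psum (alpha n w) j + j)
      (psum (alpha n w) j + j + alpha n w j)) → j < n →
      (Aset n w (j + 1) = Finset.Icc (psum (alpha n w) (j + 1) + (j + 1))
        (psum (alpha n w) (j + 1) + (j + 1) + alpha n w (j + 1))
      ∧ psum (alpha n w) j + j + alpha n w j < 2 * n
      ∧ ∀ (hlt : psum (alpha n w) j + j + alpha n w j < 2 * n),
          w ⟨psum (alpha n w) j + j + alpha n w j, hlt⟩ = false) := by
    intro j hj hprev hjn
    set lo := psum (alpha n w) j + j with hlo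
    set hi := lo + alpha n w j with hhi
    have hhiA : hi ∈ Aset n w j := by
      rw [hprev, Finset.mem_Icc]; omega
    have hhimem := (mem_Aset n w j hi).1 hhiA
    have hhilt : hi < 2 * n := by
      rcases lt_or_eq_of_le hhimem.1 with h1 | h1
      · exact h1
      · exfalso
        rw [h1] at hhimem
        have := dn_top hw
        omega
    have hstep := dnCount_succ n w hi hhilt
    have hwfalse : w ⟨hi, hhilt⟩ = false := by
      by_contra hcon
      rw [Bool.not_eq_false] at hcon
      have hdn1 : dnCount n w (hi + 1) = j := by
        rw [hstep]; simp [hcon]; omega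
      have : hi + 1 ∈ Aset n w j := (mem_Aset n w j _).2 ⟨by omega, hdn1⟩
      rw [hprev, Finset.mem_Icc] at this
      omega
    have hdnsucc : dnCount n w (hi + 1) = j + 1 := by
      rw [hstep, if_pos hwfalse]
      omega
    have hne : (Aset n w (j + 1)).Nonempty := Aset_nonempty hw (j + 1) (by omega)
    have hminmem := (mem_Aset n w (j + 1) _).1 (Finset.min'_mem _ hne)
    have hmin : (Aset n w (j + 1)).min' hne = hi + 1 := by
      apply le_antisymm
      · exact Finset.min'_le _ _ ((mem_Aset n w (j + 1) _).2 ⟨by omega, hdnsucc⟩)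
      · by_contra hcon
        push_neg at hcon
        have h1 : (Aset n w (j + 1)).min' hne ≤ hi := by omega
        have h2 : dnCount n w ((Aset n w (j + 1)).min' hne) ≤ dnCount n w hi :=
          dnCount_mono n w h1
        omega
    have hIcc := Aset_eq_Icc n w (j + 1) hne
    rw [hmin] at hIcc
    have hps : psum (alpha n w) (j + 1) + (j + 1) = hi + 1 := by
      rw [psum_succ]
      omega
    refine ⟨?_, hhilt, fun _ => hwfalse⟩
    rw [hps, hIcc]
  -- base case and induction
  intro j
  induction j with
  | zero =>
    intro _
    have hne : (Aset n w 0).Nonempty := Aset_nonempty hw 0 (by omega)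
    have hmin : (Aset n w 0).min' hne = 0 := by
      apply le_antisymm
      · apply Finset.min'_le
        rw [mem_Aset]
        exact ⟨by omega, dnCount_zero n w⟩
      · omega
    have hIcc := Aset_eq_Icc n w 0 hne
    rw [hmin] at hIcc
    constructor
    · simpa [psum] using hIcc
    · intro h0 hlt
      have := key 0 (by omega) (by simpa [psum] using hIcc) h0
      simp only [psum, Finset.range_zero, Finset.sum_empty, Nat.zero_add] at this hlt ⊢
      exact this.2.2 hlt
  | succ j ih =>
    intro hj
    have hprev := (ih (by omega)).1
    have hkey := key j (by omega) hprev (by omega)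
    refine ⟨hkey.1, ?_⟩
    intro hjn hlt
    exact (key (j + 1) hj hkey.1 hjn).2.2 hlt

lemma Aset_top : Aset n w n = {2 * n} := by
  ext m
  rw [mem_Aset, Finset.mem_singleton]
  constructor
  · rintro ⟨h1, h2⟩
    rcases lt_or_eq_of_le h1 with h1 | h1
    · exfalso
      have h3 := up_add_dn n w m (by omega)
      have h4 := hw.1 m (by omega)
      omega
    · exact h1
  · rintro rfl
    exact ⟨le_refl _, dn_top hw⟩

lemma alpha_psum_top : psum (alpha n w) n = n ∧ alpha n w n = 0 := by
  have h1 := (Aset_structure hw n (le_refl n)).1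
  rw [Aset_top hw] at h1
  have h2 : psum (alpha n w) n + n ∈ ({2 * n} : Finset ℕ) := by
    rw [h1, Finset.mem_Icc]; omega
  have h3 : psum (alpha n w) n + n + alpha n w n ∈ ({2 * n} : Finset ℕ) := by
    rw [h1, Finset.mem_Icc]; omega
  rw [Finset.mem_singleton] at h2 h3
  omega

lemma isComp_alpha : IsComp n (alpha n w) := by
  refine ⟨?_, ?_, (alpha_psum_top hw).1⟩
  · intro i hi
    rcases lt_or_eq_of_le hi with hi | rfl
    · rw [alpha_eq_Aset]
      have : Aset n w i = ∅ := by
        rw [Finset.eq_empty_iff_forall_notMem]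
        intro m hm
        rw [mem_Aset] at hm
        have h1 := dnCount_le_top n w m
        have h2 := dn_top hw
        omega
      rw [this]
      simp
    · exact (alpha_psum_top hw).2
  · intro k hk
    have h1 := (Aset_structure hw k hk).1
    have h2 : psum (alpha n w) k + k ∈ Aset n w k := by
      rw [h1, Finset.mem_Icc]; omega
    rw [mem_Aset] at h2
    have h3 := up_add_dn n w (psum (alpha n w) k + k) h2.1
    have h4 := hw.1 _ h2.1
    omega

lemma wcomp_alpha : wcomp n (alpha n w) = w := by
  funext p
  have hdpos : ∀ k, dpos (alpha n w) k = psum (alpha n w) k + k + alpha n w k := by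
    intro k
    unfold dpos
    rw [psum_succ]
    omega
  cases hb : w p with
  | true =>
    rw [wcomp_true_iff]
    intro k hk hcon
    rw [hdpos k] at hcon
    have hlt : psum (alpha n w) k + k + alpha n w k < 2 * n := by rw [← hcon]; exact p.isLt
    have := (Aset_structure hw k (by omega)).2 hk hlt
    have hp : p = ⟨psum (alpha n w) k + k + alpha n w k, hlt⟩ := Fin.ext hcon
    rw [hp, this] at hb
    exact Bool.noConfusion hb
  | false =>
    rw [wcomp_false_iff]
    -- derive the down-position structure of p
    have hplt : (p : ℕ) < 2 * n := p.isLt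
    have hstep := dnCount_succ n w p hplt
    have hpe : (⟨(p : ℕ), hplt⟩ : Fin (2 * n)) = p := Fin.eta p hplt
    rw [hpe, hb] at hstep
    simp only [if_pos] at hstep
    set j := dnCount n w (p : ℕ) with hj
    have hdn1 : dnCount n w ((p : ℕ) + 1) = j + 1 := by rw [hstep]
    have hjn : j < n := by
      have h1 := dnCount_le_top n w ((p : ℕ) + 1)
      have h2 := dn_top hw
      omega
    have h1 := (Aset_structure hw j (by omega)).1
    have hpA : (p : ℕ) ∈ Aset n w j := (mem_Aset n w j _).2 ⟨by omega, rfl⟩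
    rw [h1, Finset.mem_Icc] at hpA
    have hhiA : psum (alpha n w) j + j + alpha n w j ∈ Aset n w j := by
      rw [h1, Finset.mem_Icc]; omega
    rw [mem_Aset] at hhiA
    have hphi : (p : ℕ) = psum (alpha n w) j + j + alpha n w j := by
      rcases lt_or_eq_of_le hpA.2 with hc | hc
      · exfalso
        have := dnCount_mono n w (show (p : ℕ) + 1 ≤ psum (alpha n w) j + j + alpha n w j
          by omega)
        omega
      · exact hc
    exact ⟨j, hjn, by rw [hdpos j]; exact hphi⟩

end Dyck

/-! ### Merging and splitting compositions -/

lemma psum_one (a : ℕ → ℕ) : psum a 1 = a 0 := by simp [psum]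

lemma psum_two (a : ℕ → ℕ) : psum a 2 = a 0 + a 1 := by
  rw [show (2:ℕ) = 1 + 1 from rfl, psum_succ, psum_one]

/-- Merge the first two parts (losing one unit). -/
def cmerge (a : ℕ → ℕ) : ℕ → ℕ
  | 0 => a 0 + a 1 - 1
  | (i + 1) => a (i + 2)

/-- Split the first part into `k` and the rest (adding one unit). -/
def csplit (k : ℕ) (b : ℕ → ℕ) : ℕ → ℕ
  | 0 => k
  | 1 => b 0 + 1 - k
  | (i + 2) => b (i + 1)

lemma a0_pos {n : ℕ} {a : ℕ → ℕ} (h : IsComp (n + 1) a) : 1 ≤ a 0 := by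
  have := h.2.1 1 (by omega)
  rwa [psum_one] at this

lemma psum_cmerge (a : ℕ → ℕ) (ha : 1 ≤ a 0) :
    ∀ k, 1 ≤ k → psum (cmerge a) k + 1 = psum a (k + 1) := by
  intro k hk
  induction k with
  | zero => omega
  | succ k ih =>
    rcases Nat.eq_zero_or_pos k with rfl | hkpos
    · rw [psum_one, psum_two]
      show (a 0 + a 1 - 1) + 1 = _
      omega
    · obtain ⟨k', rfl⟩ : ∃ k', k = k' + 1 := ⟨k - 1, by omega⟩
      have e1 : psum (cmerge a) (k' + 1 + 1) = psum (cmerge a) (k' + 1) + cmerge a (k' + 1) :=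
        psum_succ _ _
      have e2 : psum a (k' + 1 + 1 + 1) = psum a (k' + 1 + 1) + a (k' + 1 + 1) := psum_succ _ _
      have e3 : cmerge a (k' + 1) = a (k' + 1 + 1) := rfl
      have h1 := ih hkpos
      omega

lemma psum_csplit (k : ℕ) (b : ℕ → ℕ) (hk2 : k ≤ b 0 + 1) :
    ∀ j, 1 ≤ j → psum (csplit k b) (j + 1) = psum b j + 1 := by
  intro j hj
  induction j with
  | zero => omega
  | succ j ih =>
    rcases Nat.eq_zero_or_pos j with rfl | hjpos
    · rw [psum_two, psum_one]
      show k + (b 0 + 1 - k) = _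
      omega
    · obtain ⟨j', rfl⟩ : ∃ j', j = j' + 1 := ⟨j - 1, by omega⟩
      have e1 : psum (csplit k b) (j' + 1 + 1 + 1)
          = psum (csplit k b) (j' + 1 + 1) + csplit k b (j' + 1 + 1) := psum_succ _ _
      have e2 : psum b (j' + 1 + 1) = psum b (j' + 1) + b (j' + 1) := psum_succ _ _
      have e3 : csplit k b (j' + 1 + 1) = b (j' + 1) := rfl
      have h1 := ih hjpos
      omega

lemma isComp_cmerge {n : ℕ} {a : ℕ → ℕ} (h : IsComp (n + 1) a) : IsComp n (cmerge a) := by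
  have ha0 := a0_pos h
  refine ⟨?_, ?_, ?_⟩
  · intro i hi
    rcases Nat.eq_zero_or_pos i with rfl | hipos
    · have hn0 : n = 0 := by omega
      have h1 : a 0 = 1 := by
        have := h.2.2
        rw [hn0, psum_one] at this
        exact this
      have h2 : a 1 = 0 := h.1 1 (by omega)
      show a 0 + a 1 - 1 = 0
      omega
    · obtain ⟨i', rfl⟩ : ∃ i', i = i' + 1 := ⟨i - 1, by omega⟩
      show a (i' + 2) = 0
      exact h.1 (i' + 2) (by omega)
  · intro k hk
    rcases Nat.eq_zero_or_pos k with rfl | hkpos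
    · omega
    · have h1 := psum_cmerge a ha0 k hkpos
      have h2 := h.2.1 (k + 1) (by omega)
      omega
  · rcases Nat.eq_zero_or_pos n with rfl | hnpos
    · simp [psum]
    · have h1 := psum_cmerge a ha0 n hnpos
      have h2 := h.2.2
      omega

lemma isComp_csplit {n : ℕ} {b : ℕ → ℕ} {k : ℕ} (h : IsComp n b)
    (hk1 : 1 ≤ k) (hk2 : k ≤ b 0 + 1) : IsComp (n + 1) (csplit k b) := by
  refine ⟨?_, ?_, ?_⟩
  · intro i hi
    match i, hi with
    | 1, hi =>
      have hn0 : n = 0 := by omega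
      have hb0 : b 0 = 0 := h.1 0 (by omega)
      show b 0 + 1 - k = 0
      omega
    | (i + 2), hi =>
      show b (i + 1) = 0
      exact h.1 (i + 1) (by omega)
  · intro j hj
    match j, hj with
    | 0, _ => omega
    | 1, _ =>
      rw [psum_one]
      show 1 ≤ k
      exact hk1
    | (j + 2), hj =>
      show j + 2 ≤ psum (csplit k b) (j + 1 + 1)
      have h1 := psum_csplit k b hk2 (j + 1) (by omega)
      have h2 := h.2.1 (j + 1) (by omega)
      omega
  · rcases Nat.eq_zero_or_pos n with rfl | hnpos
    · have hb0 : b 0 = 0 := h.1 0 (by omega)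
      rw [psum_one]
      show k = 0 + 1
      omega
    · have h1 := psum_csplit k b hk2 n hnpos
      have h2 := h.2.2
      omega

lemma csplit_cmerge {n : ℕ} {a : ℕ → ℕ} (h : IsComp (n + 1) a) :
    csplit (a 0) (cmerge a) = a := by
  have ha0 := a0_pos h
  funext i
  match i with
  | 0 => rfl
  | 1 =>
    show (a 0 + a 1 - 1) + 1 - a 0 = a 1
    omega
  | (i + 2) => rfl

lemma cmerge_csplit {b : ℕ → ℕ} {k : ℕ} (hk1 : 1 ≤ k) (hk2 : k ≤ b 0 + 1) :
    cmerge (csplit k b) = b := by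
  funext i
  match i with
  | 0 =>
    show k + (b 0 + 1 - k) - 1 = b 0
    omega
  | (i + 1) => rfl

/-! ### The integral computation -/

lemma binom_div (m : ℕ) (u v : ℝ) :
    ((u + v) ^ (m + 1) - v ^ (m + 1)) / ((m : ℝ) + 1) / (m.factorial : ℝ)
      = ∑ k ∈ Finset.Icc 1 (m + 1), u ^ k / (k.factorial : ℝ) *
          (v ^ (m + 1 - k) / ((m + 1 - k).factorial : ℝ)) := by
  have h1 : (u + v) ^ (m + 1) =
      ∑ j ∈ Finset.range (m + 2), u ^ j * v ^ (m + 1 - j) * ((m + 1).choose j : ℝ) :=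
    add_pow u v (m + 1)
  have h2 : Finset.range (m + 2) = insert 0 (Finset.Icc 1 (m + 1)) := by
    ext j
    simp only [Finset.mem_range, Finset.mem_insert, Finset.mem_Icc]
    omega
  rw [h1, h2, Finset.sum_insert (by simp)]
  simp only [pow_zero, one_mul, Nat.sub_zero, Nat.choose_zero_right, Nat.cast_one, mul_one]
  rw [add_sub_cancel_left, Finset.sum_div, Finset.sum_div]
  apply Finset.sum_congr rfl
  intro j hj
  rw [Finset.mem_Icc] at hj
  have hfac : ((m + 1).choose j : ℝ) * (j.factorial : ℝ) * ((m + 1 - j).factorial : ℝ)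
      = ((m : ℝ) + 1) * (m.factorial : ℝ) := by
    have := Nat.choose_mul_factorial_mul_factorial hj.2
    have hcast : (((m + 1).choose j * j.factorial * (m + 1 - j).factorial : ℕ) : ℝ)
        = (((m + 1).factorial : ℕ) : ℝ) := by rw [this]
    push_cast at hcast
    rw [hcast, Nat.factorial_succ]
    push_cast
    ring
  have hj0 : (j.factorial : ℝ) ≠ 0 := Nat.cast_ne_zero.2 (Nat.factorial_ne_zero j)
  have hj1 : ((m + 1 - j).factorial : ℝ) ≠ 0 := Nat.cast_ne_zero.2 (Nat.factorial_ne_zero _)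
  have hm0 : ((m : ℝ) + 1) ≠ 0 := by positivity
  have hm1 : (m.factorial : ℝ) ≠ 0 := Nat.cast_ne_zero.2 (Nat.factorial_ne_zero m)
  field_simp
  linear_combination u ^ j * v ^ (m + 1 - j) * hfac

lemma integral_term (m : ℕ) (u v : ℝ) (c : ℝ) :
    (∫ t in v..(u + v), t ^ m / (m.factorial : ℝ) * c)
      = (∑ k ∈ Finset.Icc 1 (m + 1), u ^ k / (k.factorial : ℝ) *
          (v ^ (m + 1 - k) / ((m + 1 - k).factorial : ℝ))) * c := by
  rw [intervalIntegral.integral_mul_const, intervalIntegral.integral_div, integral_pow,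
    binom_div]

lemma isDyckPath_zero (w : Fin (2 * 0) → Bool) : IsDyckPath 0 w := by
  constructor
  · intro m hm
    interval_cases m
    simp [upCount_zero]
  · rw [upCount_zero]

lemma prod_split (N : ℕ) (F : ℕ → ℝ) (hF1 : N = 0 → F 1 = 1) :
    ∏ i ∈ Finset.range (N + 1), F i = F 0 * F 1 * ∏ i ∈ Finset.Ico 2 (N + 1), F i := by
  rcases Nat.eq_zero_or_pos N with rfl | hN
  · rw [Finset.prod_range_one, hF1 rfl]
    have : Finset.Ico 2 (0 + 1) = ∅ := by
      apply Finset.Ico_eq_empty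
      omega
    rw [this, Finset.prod_empty]
    ring
  · rw [Finset.range_eq_Ico, Finset.prod_eq_prod_Ico_succ_bot (by omega : 0 < N + 1),
      Finset.prod_eq_prod_Ico_succ_bot (by omega : 0 + 1 < N + 1)]
    rw [mul_assoc]

lemma prod_shift (N : ℕ) (F : ℕ → ℝ) :
    ∏ i ∈ Finset.Ico 2 (N + 1), F i = ∏ i ∈ Finset.Ico 1 N, F (i + 1) := by
  rw [Finset.prod_Ico_eq_prod_range, Finset.prod_Ico_eq_prod_range]
  apply Finset.prod_congr
  · congr 1 <;> omega
  · intro i _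
    congr 1 <;> omega

/-- equation (14) of the paper: for `n ≥ 1` and `y_0, …, y_{n-1} ≥ 0`,
`P_n(y_0,…,y_{n-1}) = ∫_{y_1}^{y_0+y_1} P_{n-1}(y, y_2, …, y_{n-1}) dy`
(for `n = 1` the integrand is `P_0 = 1`, giving `P_1(y_0) = y_0`). -/
theorem Ppoly_integral_recursion (n : ℕ) (hn : 1 ≤ n) (y : ℕ → ℝ) (hy : ∀ i < n, 0 ≤ y i) :
    Ppoly n y
      = ∫ t in (y 1)..(y 0 + y 1), Ppoly (n - 1) (fun i => if i = 0 then t else y (i + 1)) := by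
  clear hy
  obtain ⟨N, rfl⟩ : ∃ N, n = N + 1 := ⟨n - 1, by omega⟩
  have hsub : N + 1 - 1 = N := rfl
  rw [hsub]
  -- the constant factor attached to each `w' ∈ 𝒟_N`
  set C : (Fin (2 * N) → Bool) → ℝ :=
    fun w' => ∏ i ∈ Finset.Ico 1 N, y (i + 1) ^ alpha N w' i / ((alpha N w' i).factorial : ℝ)
    with hCdef
  -- expansion of the integrand
  have hC : ∀ (t : ℝ), ∀ w' ∈ dyckPaths N,
      (∏ i ∈ Finset.range N,
        (if i = 0 then t else y (i + 1)) ^ alpha N w' i / ((alpha N w' i).factorial : ℝ))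
      = t ^ alpha N w' 0 / ((alpha N w' 0).factorial : ℝ) * C w' := by
    intro t w' _
    rcases Nat.eq_zero_or_pos N with rfl | hN
    · have h0 : alpha 0 w' 0 = 0 := (isComp_alpha (isDyckPath_zero w')).1 0 (le_refl 0)
      simp [h0, hCdef]
    · obtain ⟨N', rfl⟩ : ∃ N', N = N' + 1 := ⟨N - 1, by omega⟩
      rw [Finset.range_eq_Ico, Finset.prod_eq_prod_Ico_succ_bot (by omega : 0 < N' + 1)]
      simp only [if_pos rfl, hCdef]
      congr 1
      apply Finset.prod_congr rfl
      intro i hi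
      rw [Finset.mem_Ico] at hi
      rw [if_neg (by omega)]
  -- compute the integral
  have hPint : (∫ t in (y 1)..(y 0 + y 1), Ppoly N (fun i => if i = 0 then t else y (i + 1)))
      = ∑ w' ∈ dyckPaths N, ∑ k ∈ Finset.Icc 1 (alpha N w' 0 + 1),
          y 0 ^ k / (k.factorial : ℝ) *
            (y 1 ^ (alpha N w' 0 + 1 - k) / ((alpha N w' 0 + 1 - k).factorial : ℝ)) * C w' := by
    have heq : Set.EqOn (fun t => Ppoly N (fun i => if i = 0 then t else y (i + 1)))
        (fun t => ∑ w' ∈ dyckPaths N,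
          t ^ alpha N w' 0 / ((alpha N w' 0).factorial : ℝ) * C w')
        (Set.uIcc (y 1) (y 0 + y 1)) := by
      intro t _
      simp only [Ppoly]
      exact Finset.sum_congr rfl (hC t)
    rw [intervalIntegral.integral_congr heq,
      intervalIntegral.integral_finset_sum
        (f := fun w' t => t ^ alpha N w' 0 / ((alpha N w' 0).factorial : ℝ) * C w')
        (fun w' _ => (((continuous_pow _).div_const _).mul continuous_const).intervalIntegrable _ _)]
    apply Finset.sum_congr rfl
    intro w' _
    rw [integral_term]
    rw [Finset.sum_mul]
  rw [hPint, Finset.sum_sigma']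
  -- the bijection
  apply Finset.sum_nbij'
    (i := fun w => (⟨wcomp N (cmerge (alpha (N + 1) w)), alpha (N + 1) w 0⟩ :
      (_ : Fin (2 * N) → Bool) × ℕ))
    (j := fun q => wcomp (N + 1) (csplit q.2 (alpha N q.1)))
  · -- membership forward
    intro w hw
    have hDy : IsDyckPath (N + 1) w := mem_dyckPaths.1 hw
    have hcomp := isComp_alpha hDy
    have hmer := isComp_cmerge hcomp
    have ha0 := a0_pos hcomp
    rw [Finset.mem_sigma]
    constructor
    · exact mem_dyckPaths.2 (isDyck_wcomp hmer)
    · have e0 : cmerge (alpha (N + 1) w) 0 = alpha (N + 1) w 0 + alpha (N + 1) w 1 - 1 := rfl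
      dsimp only
      rw [Finset.mem_Icc, alpha_wcomp hmer 0, e0]
      omega
  · -- membership backward
    intro q hq
    rw [Finset.mem_sigma] at hq
    have hb := isComp_alpha (mem_dyckPaths.1 hq.1)
    rw [Finset.mem_Icc] at hq
    exact mem_dyckPaths.2 (isDyck_wcomp (isComp_csplit hb hq.2.1 hq.2.2))
  · -- left inverse
    intro w hw
    have hDy : IsDyckPath (N + 1) w := mem_dyckPaths.1 hw
    have hcomp := isComp_alpha hDy
    have hmer := isComp_cmerge hcomp
    show wcomp (N + 1) (csplit (alpha (N + 1) w 0)
      (alpha N (wcomp N (cmerge (alpha (N + 1) w))))) = w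
    have e1 : alpha N (wcomp N (cmerge (alpha (N + 1) w))) = cmerge (alpha (N + 1) w) :=
      funext (alpha_wcomp hmer)
    rw [e1, csplit_cmerge hcomp, wcomp_alpha hDy]
  · -- right inverse
    rintro ⟨w', k⟩ hq
    rw [Finset.mem_sigma, Finset.mem_Icc] at hq
    obtain ⟨hq1, hk1, hk2⟩ := hq
    have hbDy : IsDyckPath N w' := mem_dyckPaths.1 hq1
    have hb := isComp_alpha hbDy
    have hsp := isComp_csplit (k := k) hb hk1 hk2
    have e2 : alpha (N + 1) (wcomp (N + 1) (csplit k (alpha N w')))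
        = csplit k (alpha N w') := funext (alpha_wcomp hsp)
    have h1 : wcomp N (cmerge (alpha (N + 1) (wcomp (N + 1) (csplit k (alpha N w'))))) = w' := by
      rw [e2, cmerge_csplit hk1 hk2, wcomp_alpha hbDy]
    have h2 : alpha (N + 1) (wcomp (N + 1) (csplit k (alpha N w'))) 0 = k := by
      rw [e2]
      rfl
    show (⟨wcomp N (cmerge (alpha (N + 1) (wcomp (N + 1) (csplit k (alpha N w'))))),
      alpha (N + 1) (wcomp (N + 1) (csplit k (alpha N w'))) 0⟩ :
        (_ : Fin (2 * N) → Bool) × ℕ) = ⟨w', k⟩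
    rw [h1, h2]
  · -- values
    intro w hw
    have hDy : IsDyckPath (N + 1) w := mem_dyckPaths.1 hw
    have hcomp := isComp_alpha hDy
    have hmer := isComp_cmerge hcomp
    have ha0 := a0_pos hcomp
    have hF1 : N = 0 → y 1 ^ alpha (N + 1) w 1 / ((alpha (N + 1) w 1).factorial : ℝ) = 1 := by
      intro hN0
      have : alpha (N + 1) w 1 = 0 := hcomp.1 1 (by omega)
      simp [this]
    rw [prod_split N _ hF1, prod_shift N]
    have e1 : alpha N (wcomp N (cmerge (alpha (N + 1) w))) = cmerge (alpha (N + 1) w) :=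
      funext (alpha_wcomp hmer)
    have e0 : cmerge (alpha (N + 1) w) 0 = alpha (N + 1) w 0 + alpha (N + 1) w 1 - 1 := rfl
    -- second exponent
    have e3 : cmerge (alpha (N + 1) w) 0 + 1 - alpha (N + 1) w 0 = alpha (N + 1) w 1 := by
      omega
    simp only [hCdef, e1, e0]
    rw [show alpha (N + 1) w 0 + alpha (N + 1) w 1 - 1 + 1 - alpha (N + 1) w 0
      = alpha (N + 1) w 1 by omega]
    congr 1
    apply Finset.prod_congr rfl
    intro i hi
    rw [Finset.mem_Ico] at hi
    obtain ⟨i', rfl⟩ : ∃ i', i = i' + 1 := ⟨i - 1, by omega⟩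
    rfl
end

section
/- For every integer n ≥ 1 and all real numbers y_0,…,y_{n−1} ≥ 0, P_n(y_0,…,y_{n−1}) = ∫_0^{y_0} dx_0 ∫_0^{y_1+x_0} dx_1 ∫_0^{y_2+x_1} dx_2 ⋯ ∫_0^{y_{n−1}+x_{n−2}} dx_{n−1}. -/
/-- The iterated integral `∫_0^{y_i + c} dx_i ∫_0^{y_{i+1} + x_i} dx_{i+1} ⋯` with `k` remaining
integration variables, where `c` is the value of the previous integration variable. -/
noncomputable def nestedIntegral (y : ℕ → ℝ) : ℕ → ℕ → ℝ → ℝ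
  | 0, _, _ => 1
  | k + 1, i, c => ∫ x in (0 : ℝ)..(y i + c), nestedIntegral y k (i + 1) x

/-! ### Auxiliary development -/

namespace DyckAux

/-- counting `true`s among the first `m` values of `W`. -/
def cnt (W : ℕ → Bool) (m : ℕ) : ℕ :=
  ((Finset.range m).filter (fun q => W q = true)).card

lemma cnt_zero (W : ℕ → Bool) : cnt W 0 = 0 := by simp [cnt]

lemma cnt_succ (W : ℕ → Bool) (m : ℕ) :
    cnt W (m + 1) = cnt W m + (if W m then 1 else 0) := by
  unfold cnt
  rw [Finset.range_add_one, Finset.filter_insert]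
  split
  · rw [Finset.card_insert_of_notMem (by simp)]
  · simp

lemma cnt_le (W : ℕ → Bool) (m : ℕ) : cnt W m ≤ m := by
  calc cnt W m ≤ (Finset.range m).card := Finset.card_le_card (Finset.filter_subset _ _)
  _ = m := Finset.card_range m

lemma cnt_mono (W : ℕ → Bool) {m m' : ℕ} (h : m ≤ m') : cnt W m ≤ cnt W m' := by
  exact Finset.card_le_card (Finset.filter_subset_filter _ (by simpa using Finset.range_subset_range.2 h))

lemma cnt_add_le (W : ℕ → Bool) (m d : ℕ) : cnt W (m + d) ≤ cnt W m + d := by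
  induction d with
  | zero => simp
  | succ d ih =>
    rw [← Nat.add_assoc, cnt_succ]
    split <;> omega

def aset (N : ℕ) (W : ℕ → Bool) (j : ℕ) : Finset ℕ :=
  (Finset.range (2 * N + 1)).filter (fun m => cnt W m + j = m)

def a0 (N : ℕ) (W : ℕ → Bool) : ℕ := (aset N W 0).card - 1

lemma cnt_eq_self_of_le (W : ℕ → Bool) {m m' : ℕ} (h : cnt W m = m) (h' : m' ≤ m) :
    cnt W m' = m' := by
  have h1 := cnt_add_le W m' (m - m')
  have h2 := cnt_le W m'
  have h3 : m' + (m - m') = m := by omega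
  rw [h3, h] at h1
  omega

lemma zero_mem_aset (N : ℕ) (W : ℕ → Bool) : 0 ∈ aset N W 0 := by
  simp [aset, cnt_zero]

lemma aset_zero_eq_range (N : ℕ) (W : ℕ → Bool) :
    aset N W 0 = Finset.range (a0 N W + 1) := by
  have hne : (aset N W 0).Nonempty := ⟨0, zero_mem_aset N W⟩
  set c := (aset N W 0).max' hne with hc
  have hcm : c ∈ aset N W 0 := (aset N W 0).max'_mem hne
  have heq : aset N W 0 = Finset.range (c + 1) := by
    ext m
    simp only [Finset.mem_range]
    constructor
    · intro hm
      have := Finset.le_max' _ m hm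
      omega
    · intro hm
      simp only [aset, Finset.mem_filter, Finset.mem_range, Nat.add_zero] at hcm ⊢
      exact ⟨by omega, cnt_eq_self_of_le W hcm.2 (by omega)⟩
  have hcard : (aset N W 0).card = c + 1 := by rw [heq, Finset.card_range]
  have : a0 N W = c := by unfold a0; omega
  rw [heq, this]

lemma cnt_of_le_a0 (N : ℕ) (W : ℕ → Bool) {m : ℕ} (h : m ≤ a0 N W) : cnt W m = m := by
  have : m ∈ aset N W 0 := by rw [aset_zero_eq_range]; simp; omega
  simp only [aset, Finset.mem_filter, Finset.mem_range, Nat.add_zero] at this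
  exact this.2

lemma le_a0_of_cnt (N : ℕ) (W : ℕ → Bool) {m : ℕ} (hm : m ≤ 2 * N) (h : cnt W m = m) :
    m ≤ a0 N W := by
  have : m ∈ aset N W 0 := by simp [aset, Finset.mem_filter]; omega
  rw [aset_zero_eq_range] at this
  simp at this; omega

lemma a0_le (N : ℕ) (W : ℕ → Bool) : a0 N W ≤ 2 * N := by
  have : a0 N W ∈ aset N W 0 := by rw [aset_zero_eq_range]; simp
  simp [aset, Finset.mem_filter] at this; omega

lemma cnt_a0 (N : ℕ) (W : ℕ → Bool) : cnt W (a0 N W) = a0 N W :=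
  cnt_of_le_a0 N W le_rfl

lemma W_true_of_lt_a0 (N : ℕ) (W : ℕ → Bool) {q : ℕ} (h : q < a0 N W) : W q = true := by
  have h1 : cnt W (q + 1) = q + 1 := cnt_of_le_a0 N W (by omega)
  have h2 : cnt W q = q := cnt_of_le_a0 N W (by omega)
  rw [cnt_succ, h2] at h1
  by_contra hq
  simp only [Bool.not_eq_true] at hq
  rw [hq] at h1
  simp at h1

lemma W_a0_false (N : ℕ) (W : ℕ → Bool) (h : a0 N W < 2 * N) : W (a0 N W) = false := by
  have h1 : cnt W (a0 N W + 1) ≠ a0 N W + 1 := by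
    intro hc
    have := le_a0_of_cnt N W (by omega) hc
    omega
  rw [cnt_succ, cnt_a0] at h1
  by_contra hq
  simp only [Bool.not_eq_false] at hq
  simp [hq] at h1

/-- Dyck word of size `N` on `ℕ`-indexing, with `false` tail. -/
def DyckW (N : ℕ) (W : ℕ → Bool) : Prop :=
  (∀ m ≤ 2 * N, m ≤ 2 * cnt W m) ∧ cnt W (2 * N) = N ∧ ∀ q, 2 * N ≤ q → W q = false

def insW (b : ℕ) (W : ℕ → Bool) : ℕ → Bool :=
  fun p => if p < b + 1 then true else if p = b + 1 then false else W (p - 2)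

def delW (b : ℕ) (W : ℕ → Bool) : ℕ → Bool :=
  fun q => if q < b then true else W (q + 2)

lemma a0_le_N {N : ℕ} {W : ℕ → Bool} (hW : DyckW N W) : a0 N W ≤ N := by
  have h1 : cnt W (a0 N W) ≤ cnt W (2 * N) := cnt_mono W (a0_le N W)
  rw [cnt_a0, hW.2.1] at h1
  exact h1

section Ins
variable {N : ℕ} {W : ℕ → Bool} (hW : DyckW N W) {b : ℕ} (hb : b ≤ a0 N W)

lemma cnt_insW_low (m : ℕ) (hm : m ≤ b + 1) : cnt (insW b W) m = m := by
  induction m with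
  | zero => exact cnt_zero _
  | succ m ih =>
    rw [cnt_succ, ih (by omega)]
    have : insW b W m = true := by simp only [insW]; rw [if_pos (by omega)]
    simp [this]

include hb in
lemma cnt_insW_high (d : ℕ) : cnt (insW b W) (b + 2 + d) = cnt W (b + d) + 1 := by
  induction d with
  | zero =>
    have h1 : cnt (insW b W) (b + 2) = cnt (insW b W) (b + 1) + (if insW b W (b+1) then 1 else 0) :=
      cnt_succ _ _
    have h2 : insW b W (b + 1) = false := by simp only [insW]; rw [if_neg (by omega)]; simp
    have h3 : cnt W b = b := cnt_of_le_a0 N W hb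
    rw [cnt_insW_low (b+1) le_rfl, h2] at h1
    simp at h1
    rw [show b + 0 = b from rfl, h3, h1]
  | succ d ih =>
    have h1 : b + 2 + (d + 1) = (b + 2 + d) + 1 := by omega
    have h2 : insW b W (b + 2 + d) = W (b + d) := by
      simp only [insW]; rw [if_neg (by omega), if_neg (by omega)]
      congr 1; omega
    rw [h1, cnt_succ, ih, h2, show b + (d+1) = (b+d)+1 from by omega, cnt_succ]
    ring

include hW hb in
lemma dyck_insW : DyckW (N + 1) (insW b W) := by
  have hbN : b ≤ N := le_trans hb (a0_le_N hW)
  refine ⟨?_, ?_, ?_⟩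
  · intro m hm
    by_cases h : m ≤ b + 1
    · rw [cnt_insW_low m h]; omega
    · have hd : m = b + 2 + (m - b - 2) := by omega
      rw [hd, cnt_insW_high hb]
      have := hW.1 (b + (m - b - 2)) (by omega)
      omega
  · have hd : 2 * (N + 1) = b + 2 + (2 * N - b) := by omega
    rw [hd, cnt_insW_high hb, show b + (2*N - b) = 2*N from by omega, hW.2.1]
  · intro q hq
    simp only [insW]
    rw [if_neg (by omega), if_neg (by omega)]
    exact hW.2.2 _ (by omega)

include hW hb in
lemma a0_insW : a0 (N + 1) (insW b W) = b + 1 := by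
  have hbN : b ≤ N := le_trans hb (a0_le_N hW)
  have h1 : b + 1 ≤ a0 (N + 1) (insW b W) :=
    le_a0_of_cnt (N+1) _ (by omega) (cnt_insW_low (b+1) le_rfl)
  have h2 : cnt (insW b W) (b + 2) = b + 1 := by
    have := cnt_insW_high (W := W) hb 0
    rw [show b + 0 = b from rfl, cnt_of_le_a0 N W hb] at this
    simpa using this
  by_contra h
  have h3 : b + 2 ≤ a0 (N + 1) (insW b W) := by omega
  have := cnt_of_le_a0 (N+1) (insW b W) h3
  omega

include hb in
lemma aset_insW_succ (j : ℕ) :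
    aset (N + 1) (insW b W) (j + 1) =
      Finset.image (· + 2) ((aset N W j).filter (fun m' => b ≤ m')) := by
  ext m
  simp only [aset, Finset.mem_image, Finset.mem_filter, Finset.mem_range]
  constructor
  · rintro ⟨hm, hcond⟩
    have hmb : b + 2 ≤ m := by
      by_contra h
      have := cnt_insW_low (b := b) (W := W) m (by omega)
      omega
    refine ⟨m - 2, ⟨⟨by omega, ?_⟩, by omega⟩, by omega⟩
    have hd : m = b + 2 + (m - b - 2) := by omega
    rw [hd, cnt_insW_high hb] at hcond
    have : m - 2 = b + (m - b - 2) := by omega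
    rw [this]
    omega
  · rintro ⟨m', ⟨⟨hm', hcond⟩, hbm'⟩, rfl⟩
    have hd : m' + 2 = b + 2 + (m' - b) := by omega
    rw [hd, cnt_insW_high hb, show b + (m' - b) = m' from by omega]
    constructor
    · omega
    · omega

include hb in
lemma card_aset_insW_one :
    (aset (N + 1) (insW b W) 1).card = a0 N W - b + 1 := by
  rw [show (1:ℕ) = 0 + 1 from rfl, aset_insW_succ hb,
    Finset.card_image_of_injective _ (add_left_injective 2)]
  have : (aset N W 0).filter (fun m' => b ≤ m') = Finset.Icc b (a0 N W) := by
    rw [aset_zero_eq_range]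
    ext m
    simp only [Finset.mem_filter, Finset.mem_range, Finset.mem_Icc]
    omega
  rw [this, Nat.card_Icc]
  omega

include hb in
lemma card_aset_insW_ge_two (j : ℕ) :
    (aset (N + 1) (insW b W) (j + 2)).card = (aset N W (j + 1)).card := by
  rw [show j + 2 = (j+1) + 1 from rfl, aset_insW_succ hb,
    Finset.card_image_of_injective _ (add_left_injective 2)]
  congr 1
  apply Finset.filter_true_of_mem
  intro m hm
  simp only [aset, Finset.mem_filter, Finset.mem_range] at hm
  by_contra h
  have : m ≤ a0 N W := le_trans (by omega) hb
  have := cnt_of_le_a0 N W this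
  omega

end Ins

section Del
variable {N : ℕ} {W' : ℕ → Bool} (hW' : DyckW (N + 1) W')

include hW' in
lemma one_le_a0' : 1 ≤ a0 (N + 1) W' := by
  have h1 := hW'.1 1 (by omega)
  have h2 := cnt_le W' 1
  exact le_a0_of_cnt (N+1) W' (by omega) (by omega)

variable {b : ℕ} (hb1 : b + 1 = a0 (N + 1) W')

include hb1 in
lemma cnt_delW_prefix : ∀ m ≤ b, cnt (delW b W') m = m := by
  intro m hm
  induction m with
  | zero => exact cnt_zero _
  | succ m ih =>
    rw [cnt_succ, ih (by omega)]
    have : delW b W' m = true := by simp only [delW]; rw [if_pos (by omega)]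
    simp [this]

include hW' hb1 in
lemma cnt_delW (d : ℕ) :
    cnt W' (b + 2 + d) = cnt (delW b W') (b + d) + 1 := by
  induction d with
  | zero =>
    have h1 : cnt W' (b + 1) = b + 1 := cnt_of_le_a0 (N+1) W' (by omega)
    have h2 : W' (b + 1) = false := by
      rw [hb1]
      exact W_a0_false (N+1) W' (by have := a0_le_N hW'; omega)
    rw [show b + 2 + 0 = (b+1)+1 from by omega, cnt_succ, h1, h2]
    simp [cnt_delW_prefix hb1 b le_rfl]
  | succ d ih =>
    have h2 : W' (b + 2 + d) = delW b W' (b + d) := by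
      simp only [delW]; rw [if_neg (by omega)]; congr 1; omega
    rw [show b + 2 + (d+1) = (b+2+d)+1 from by omega, cnt_succ, ih, h2,
      show b + (d+1) = (b+d)+1 from by omega, cnt_succ]
    ring

include hW' hb1 in
lemma dyck_delW : DyckW N (delW b W') := by
  have hbN : b ≤ N := by have := a0_le_N hW'; omega
  refine ⟨?_, ?_, ?_⟩
  · intro m hm
    by_cases h : m ≤ b
    · rw [cnt_delW_prefix hb1 m h]; omega
    · have key := cnt_delW hW' hb1 (m - b)
      rw [show b + (m - b) = m from by omega] at key
      have h1 := hW'.1 (b + 2 + (m - b)) (by omega)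
      rw [key] at h1
      omega
  · have key := cnt_delW hW' hb1 (2 * N - b)
    have h1 : b + 2 + (2 * N - b) = 2 * (N + 1) := by omega
    rw [h1, hW'.2.1, show b + (2 * N - b) = 2 * N from by omega] at key
    omega
  · intro q hq
    simp only [delW]
    rw [if_neg (by omega)]
    exact hW'.2.2 _ (by omega)

include hW' hb1 in
lemma b_le_a0_delW : b ≤ a0 N (delW b W') := by
  have hbN : b ≤ N := by have := a0_le_N hW'; omega
  exact le_a0_of_cnt N _ (by omega) (cnt_delW_prefix hb1 b le_rfl)

include hW' hb1 in
lemma insW_delW : insW b (delW b W') = W' := by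
  funext p
  simp only [insW, delW]
  by_cases h1 : p < b + 1
  · rw [if_pos h1, W_true_of_lt_a0 (N+1) W' (by omega)]
  · rw [if_neg h1]
    by_cases h2 : p = b + 1
    · rw [if_pos h2, h2, hb1, W_a0_false (N+1) W' (by have := a0_le_N hW'; omega)]
    · rw [if_neg h2, if_neg (by omega), show p - 2 + 2 = p from by omega]

end Del

lemma delW_insW {N : ℕ} {W : ℕ → Bool} {b : ℕ} (hb : b ≤ a0 N W) :
    delW b (insW b W) = W := by
  funext q
  simp only [delW, insW]
  by_cases h : q < b
  · rw [if_pos h, W_true_of_lt_a0 N W (by omega)]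
  · rw [if_neg h, if_neg (by omega), if_neg (by omega), show q + 2 - 2 = q from by omega]

/-! ### Bridge between the `Fin`-indexed definitions and the `ℕ`-indexed ones -/

/-- extend a `Fin`-indexed word by `false`s -/
def extW (n : ℕ) (w : Fin (2 * n) → Bool) : ℕ → Bool :=
  fun q => if h : q < 2 * n then w ⟨q, h⟩ else false

lemma extW_lt (n : ℕ) (w : Fin (2 * n) → Bool) (q : ℕ) (h : q < 2 * n) :
    extW n w q = w ⟨q, h⟩ := by simp [extW, h]

lemma extW_ge (n : ℕ) (w : Fin (2 * n) → Bool) (q : ℕ) (h : 2 * n ≤ q) :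
    extW n w q = false := by simp [extW]; omega

lemma upCount_eq_cnt (n : ℕ) (w : Fin (2 * n) → Bool) (m : ℕ) :
    upCount n w m = cnt (extW n w) m := by
  unfold upCount cnt
  refine Finset.card_bij (fun (p : Fin (2*n)) _ => (p : ℕ)) ?_ ?_ ?_
  · intro p hp
    simp only [Finset.mem_filter, Finset.mem_univ, true_and] at hp
    simp only [Finset.mem_filter, Finset.mem_range]
    exact ⟨hp.1, by rw [extW_lt n w p p.isLt]; exact hp.2⟩
  · intro p hp p' hp' h
    exact Fin.ext h
  · intro q hq
    simp only [Finset.mem_filter, Finset.mem_range] at hq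
    by_cases h : q < 2 * n
    · refine ⟨⟨q, h⟩, ?_, rfl⟩
      simp only [Finset.mem_filter, Finset.mem_univ, true_and]
      exact ⟨hq.1, by rw [extW_lt n w q h] at hq; exact hq.2⟩
    · rw [extW_ge n w q (by omega)] at hq
      simp at hq

lemma isDyck_iff (n : ℕ) (w : Fin (2 * n) → Bool) :
    IsDyckPath n w ↔ DyckW n (extW n w) := by
  constructor
  · intro h
    exact ⟨fun m hm => by rw [← upCount_eq_cnt]; exact h.1 m hm,
      by rw [← upCount_eq_cnt]; exact h.2, fun q hq => extW_ge n w q hq⟩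
  · intro h
    exact ⟨fun m hm => by rw [upCount_eq_cnt]; exact h.1 m hm,
      by rw [upCount_eq_cnt]; exact h.2.1⟩

lemma mem_dyckPaths (n : ℕ) (w : Fin (2 * n) → Bool) :
    w ∈ dyckPaths n ↔ DyckW n (extW n w) := by
  classical
  rw [dyckPaths, Finset.mem_filter]
  simp [isDyck_iff]

lemma alpha_eq_aset (n : ℕ) (w : Fin (2 * n) → Bool) (j : ℕ) :
    alpha n w j = (aset n (extW n w) j).card - 1 := by
  unfold alpha aset
  congr 2
  apply Finset.filter_congr
  intro m _
  simp [upCount_eq_cnt]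

lemma alpha0_eq_a0 (n : ℕ) (w : Fin (2 * n) → Bool) :
    alpha n w 0 = a0 n (extW n w) := by
  rw [alpha_eq_aset]; rfl

lemma alpha_zero_path (w : Fin (2 * 0) → Bool) : alpha 0 w 0 = 0 := by
  rw [alpha_eq_aset]
  have : aset 0 (extW 0 w) 0 = {0} := by
    ext m
    simp only [aset, Finset.mem_filter, Finset.mem_range, Finset.mem_singleton, Nat.add_zero]
    constructor
    · intro h; omega
    · rintro rfl; simp [cnt_zero]
  rw [this]
  simp

def insF (k b : ℕ) (w : Fin (2 * k) → Bool) : Fin (2 * (k + 1)) → Bool :=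
  fun p => insW b (extW k w) p

def delF (k b : ℕ) (w' : Fin (2 * (k + 1)) → Bool) : Fin (2 * k) → Bool :=
  fun q => delW b (extW (k + 1) w') q

lemma extW_insF (k b : ℕ) (w : Fin (2 * k) → Bool) (hb : b ≤ 2 * k) :
    extW (k + 1) (insF k b w) = insW b (extW k w) := by
  funext p
  by_cases h : p < 2 * (k + 1)
  · rw [extW_lt _ _ p h]; rfl
  · rw [extW_ge _ _ p (by omega)]
    symm
    simp only [insW]
    rw [if_neg (by omega), if_neg (by omega)]
    exact extW_ge _ _ _ (by omega)

lemma extW_delF (k b : ℕ) (w' : Fin (2 * (k + 1)) → Bool) (hb : b ≤ 2 * k) :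
    extW k (delF k b w') = delW b (extW (k + 1) w') := by
  funext q
  by_cases h : q < 2 * k
  · rw [extW_lt _ _ q h]; rfl
  · rw [extW_ge _ _ q (by omega)]
    symm
    simp only [delW]
    rw [if_neg (by omega)]
    exact extW_ge _ _ _ (by omega)

section InsF
variable {k b : ℕ} {w : Fin (2 * k) → Bool}
  (hW : DyckW k (extW k w)) (hb : b ≤ alpha k w 0)

include hb in
lemma hb' : b ≤ a0 k (extW k w) := by rwa [alpha0_eq_a0] at hb

include hb in
lemma hb2k : b ≤ 2 * k := le_trans (hb' hb) (a0_le _ _)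

include hW hb in
lemma insF_mem : insF k b w ∈ dyckPaths (k + 1) := by
  rw [mem_dyckPaths, extW_insF k b w (hb2k hb)]
  exact dyck_insW hW (hb' hb)

include hW hb in
lemma alpha_insF_zero : alpha (k + 1) (insF k b w) 0 = b + 1 := by
  rw [alpha0_eq_a0, extW_insF k b w (hb2k hb), a0_insW hW (hb' hb)]

include hb in
lemma alpha_insF_one : alpha (k + 1) (insF k b w) 1 = alpha k w 0 - b := by
  rw [alpha_eq_aset, extW_insF k b w (hb2k hb), card_aset_insW_one (hb' hb), alpha0_eq_a0]
  omega

include hb in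
lemma alpha_insF_ge_two (i : ℕ) :
    alpha (k + 1) (insF k b w) (i + 1 + 1) = alpha k w (i + 1) := by
  have h12 : i + 1 + 1 = i + 2 := rfl
  rw [h12, alpha_eq_aset, alpha_eq_aset, extW_insF k b w (hb2k hb),
    card_aset_insW_ge_two (hb' hb)]

include hb in
lemma delF_insF : delF k b (insF k b w) = w := by
  funext q
  show delW b (extW (k + 1) (insF k b w)) q = w q
  rw [extW_insF k b w (hb2k hb), delW_insW (hb' hb), extW_lt k w q q.isLt]

end InsF

section DelF
variable {k : ℕ} {w' : Fin (2 * (k + 1)) → Bool} (hW' : DyckW (k + 1) (extW (k + 1) w'))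

include hW' in
lemma hb1' : (alpha (k + 1) w' 0 - 1) + 1 = a0 (k + 1) (extW (k + 1) w') := by
  rw [alpha0_eq_a0]
  have := one_le_a0' hW'
  omega

include hW' in
lemma b'le : alpha (k + 1) w' 0 - 1 ≤ 2 * k := by
  have h1 := hb1' hW'
  have h2 := a0_le_N hW'
  omega

include hW' in
lemma delF_mem : delF k (alpha (k + 1) w' 0 - 1) w' ∈ dyckPaths k := by
  rw [mem_dyckPaths, extW_delF k _ w' (b'le hW')]
  exact dyck_delW hW' (hb1' hW')

include hW' in
lemma b_le_alpha_delF :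
    alpha (k + 1) w' 0 - 1 ≤ alpha k (delF k (alpha (k + 1) w' 0 - 1) w') 0 := by
  rw [alpha0_eq_a0 k (delF k (alpha (k + 1) w' 0 - 1) w'), extW_delF k _ w' (b'le hW')]
  exact b_le_a0_delW hW' (hb1' hW')

include hW' in
lemma insF_delF : insF k (alpha (k + 1) w' 0 - 1) (delF k (alpha (k + 1) w' 0 - 1) w') = w' := by
  funext p
  show insW _ (extW k (delF k _ w')) p = w' p
  rw [extW_delF k _ w' (b'le hW'), insW_delW hW' (hb1' hW'), extW_lt (k + 1) w' p p.isLt]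

end DelF

/-! ### The integral computation -/

lemma int_lemma (t u : ℝ) (a : ℕ) :
    ∫ x in (0:ℝ)..t, (u + x) ^ a / (a.factorial : ℝ)
      = ∑ b ∈ Finset.range (a + 1),
          t ^ (b + 1) / ((b+1).factorial : ℝ) * (u ^ (a - b) / ((a-b).factorial : ℝ)) := by
  have hexp : ∀ x : ℝ, (u + x) ^ a / (a.factorial : ℝ)
      = ∑ b ∈ Finset.range (a+1), (a.choose b : ℝ) * u ^ (a-b) / a.factorial * x ^ b := by
    intro x
    rw [add_comm u x, add_pow, Finset.sum_div]
    refine Finset.sum_congr rfl fun b _ => by ring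
  rw [intervalIntegral.integral_congr (g := fun x => ∑ b ∈ Finset.range (a+1),
      (a.choose b : ℝ) * u ^ (a-b) / a.factorial * x ^ b) (fun x _ => hexp x)]
  rw [intervalIntegral.integral_finset_sum]
  · refine Finset.sum_congr rfl fun b hb => ?_
    rw [intervalIntegral.integral_const_mul, integral_pow]
    simp only [Finset.mem_range] at hb
    have hb' : b ≤ a := by omega
    rw [Nat.cast_choose ℝ hb']
    have h1 : (a.factorial : ℝ) ≠ 0 := Nat.cast_ne_zero.2 (Nat.factorial_ne_zero a)
    have h2 : (b.factorial : ℝ) ≠ 0 := Nat.cast_ne_zero.2 (Nat.factorial_ne_zero b)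
    have h3 : ((a-b).factorial : ℝ) ≠ 0 := Nat.cast_ne_zero.2 (Nat.factorial_ne_zero (a-b))
    have h4 : ((b+1).factorial : ℝ) = (b+1) * b.factorial := by
      rw [Nat.factorial_succ]; push_cast; ring
    rw [h4]
    have h5 : ((b:ℝ) + 1) ≠ 0 := by positivity
    field_simp
    ring
  · intro b hb
    exact (Continuous.intervalIntegrable (by continuity) _ _)

/-! ### The key recursion -/

lemma Ppoly_succ (k : ℕ) (z : ℕ → ℝ) :
    Ppoly (k + 1) z
      = ∫ x in (0:ℝ)..(z 0), Ppoly k (fun j => if j = 0 then z 1 + x else z (j + 1)) := by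
  classical
  have hcont : ∀ w : Fin (2 * k) → Bool, Continuous (fun x : ℝ =>
      ∏ i ∈ Finset.range k, (if i = 0 then z 1 + x else z (i + 1)) ^ alpha k w i
        / ((alpha k w i).factorial : ℝ)) := by
    intro w
    apply continuous_finset_prod
    intro i _
    by_cases h : i = 0
    · subst h
      simp only [if_pos]
      exact ((continuous_const.add continuous_id).pow _).div_const _
    · simp only [if_neg h]
      exact continuous_const
  have hw_int : ∀ w ∈ dyckPaths k,
      (∫ x in (0:ℝ)..z 0, ∏ i ∈ Finset.range k,
          (if i = 0 then z 1 + x else z (i + 1)) ^ alpha k w i / ((alpha k w i).factorial : ℝ))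
      = ∑ b ∈ Finset.range (alpha k w 0 + 1),
          z 0 ^ (b+1) / ((b+1).factorial : ℝ) *
          (z 1 ^ (alpha k w 0 - b) / ((alpha k w 0 - b).factorial : ℝ) *
           ∏ i ∈ Finset.range (k-1),
             z (i+2) ^ alpha k w (i+1) / ((alpha k w (i+1)).factorial : ℝ)) := by
    intro w _
    have hprod : ∀ x : ℝ, (∏ i ∈ Finset.range k,
        (if i = 0 then z 1 + x else z (i + 1)) ^ alpha k w i / ((alpha k w i).factorial : ℝ))
        = ((z 1 + x) ^ alpha k w 0 / ((alpha k w 0).factorial : ℝ)) *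
          ∏ i ∈ Finset.range (k-1),
            z (i+2) ^ alpha k w (i+1) / ((alpha k w (i+1)).factorial : ℝ) := by
      intro x
      cases k with
      | zero =>
        simp [alpha_zero_path w]
      | succ m =>
        rw [Finset.prod_range_succ']
        rw [mul_comm]
        congr 1
    rw [intervalIntegral.integral_congr (fun x _ => hprod x)]
    rw [intervalIntegral.integral_mul_const, int_lemma, Finset.sum_mul]
    refine Finset.sum_congr rfl fun b _ => by ring
  simp only [Ppoly]
  rw [intervalIntegral.integral_finset_sum (fun w _ => ((hcont w).intervalIntegrable 0 (z 0)))]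
  rw [Finset.sum_congr rfl hw_int, Finset.sum_sigma' (dyckPaths k)
    (fun w => Finset.range (alpha k w 0 + 1))]
  symm
  refine Finset.sum_bij' (fun σ _ => insF k σ.2 σ.1)
    (fun w' _ => ⟨delF k (alpha (k + 1) w' 0 - 1) w', alpha (k + 1) w' 0 - 1⟩)
    ?_ ?_ ?_ ?_ ?_
  · rintro ⟨w, b⟩ hσ
    rw [Finset.mem_sigma] at hσ
    have hw := (mem_dyckPaths k w).1 hσ.1
    have hb : b ≤ alpha k w 0 := by
      have := hσ.2; simp only [Finset.mem_range] at this; omega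
    exact insF_mem hw hb
  · intro w' hw'
    rw [Finset.mem_sigma]
    have hW' := (mem_dyckPaths (k+1) w').1 hw'
    refine ⟨(mem_dyckPaths k _).2 ?_, ?_⟩
    · rw [extW_delF k _ w' (b'le hW')]
      exact dyck_delW hW' (hb1' hW')
    · simp only [Finset.mem_range]
      have := b_le_alpha_delF hW'
      omega
  · rintro ⟨w, b⟩ hσ
    rw [Finset.mem_sigma] at hσ
    have hw := (mem_dyckPaths k w).1 hσ.1
    have hb : b ≤ alpha k w 0 := by
      have := hσ.2; simp only [Finset.mem_range] at this; omega
    have ha : alpha (k + 1) (insF k b w) 0 = b + 1 := alpha_insF_zero hw hb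
    have hd : delF k b (insF k b w) = w := delF_insF hb
    dsimp only
    rw [ha, Nat.add_sub_cancel, hd]
  · intro w' hw'
    have hW' := (mem_dyckPaths (k+1) w').1 hw'
    exact insF_delF hW'
  · rintro ⟨w, b⟩ hσ
    rw [Finset.mem_sigma] at hσ
    have hw := (mem_dyckPaths k w).1 hσ.1
    have hb : b ≤ alpha k w 0 := by
      have := hσ.2; simp only [Finset.mem_range] at this; omega
    dsimp only
    obtain ⟨A, hA⟩ : ∃ A, A = alpha (k + 1) (insF k b w) := ⟨_, rfl⟩
    obtain ⟨B, hB⟩ : ∃ B, B = alpha k w := ⟨_, rfl⟩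
    have hA0 : A 0 = b + 1 := by rw [hA]; exact alpha_insF_zero hw hb
    have hA1 : A 1 = B 0 - b := by rw [hA, hB]; exact alpha_insF_one hb
    have hA2 : ∀ i, A (i + 1 + 1) = B (i + 1) := by
      intro i; rw [hA, hB]; exact alpha_insF_ge_two hb i
    rw [← hB] at hb
    rw [← hA, ← hB, Finset.prod_range_succ', hA0]
    cases k with
    | zero =>
      have hB0 : B 0 = 0 := by rw [hB]; exact alpha_zero_path w
      have hb0 : b = 0 := by omega
      simp [hB0, hb0]
    | succ m =>
      rw [Finset.prod_range_succ']
      have hA01 : A (0 + 1) = B 0 - b := hA1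
      rw [hA01]
      have hP : ∀ i ∈ Finset.range m,
          z (i + 1 + 1) ^ A (i + 1 + 1) / ((A (i + 1 + 1)).factorial : ℝ)
            = z (i + 2) ^ B (i + 1) / ((B (i + 1)).factorial : ℝ) := by
        intro i _
        rw [hA2 i, show i + 1 + 1 = i + 2 from rfl]
      rw [Finset.prod_congr rfl hP, show m + 1 - 1 = m from rfl]
      ring

lemma Ppoly_succ' (k : ℕ) (z : ℕ → ℝ) (t : ℝ) (zz : ℝ → ℕ → ℝ)
    (h0 : z 0 = t) (hzz : ∀ x j, zz x j = if j = 0 then z 1 + x else z (j + 1)) :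
    Ppoly (k + 1) z = ∫ x in (0:ℝ)..t, Ppoly k (zz x) := by
  have hz : ∀ x : ℝ, zz x = fun j => if j = 0 then z 1 + x else z (j + 1) :=
    fun x => funext (hzz x)
  rw [Ppoly_succ, h0]
  simp only [hz]

/-! ### Ppoly 0 -/

lemma Ppoly_zero (y : ℕ → ℝ) : Ppoly 0 y = 1 := by
  classical
  have h : ∀ w : Fin (2 * 0) → Bool, IsDyckPath 0 w := by
    intro w
    constructor
    · intro m hm
      interval_cases m
      simp [upCount]
    · simp [upCount]
  have : dyckPaths 0 = Finset.univ := by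
    rw [dyckPaths]
    exact Finset.filter_true_of_mem fun w _ => h w
  rw [Ppoly, this]
  simp only [Finset.range_zero, Finset.prod_empty]
  rw [Finset.sum_const]
  have : Fintype.card (Fin (2 * 0) → Bool) = 1 := by simp
  rw [Finset.card_univ, this]
  simp

/-! ### The nested integral identity -/

lemma nested_eq (y : ℕ → ℝ) : ∀ (k i : ℕ) (c : ℝ),
    nestedIntegral y k i c = Ppoly k (fun j => if j = 0 then y i + c else y (i + j)) := by
  intro k
  induction k with
  | zero => intro i c; rw [Ppoly_zero]; rfl
  | succ k ih =>
    intro i c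
    show (∫ x in (0:ℝ)..(y i + c), nestedIntegral y k (i + 1) x) = _
    simp only [ih]
    rw [Ppoly_succ' k (fun j => if j = 0 then y i + c else y (i + j)) (y i + c)
      (fun x j => if j = 0 then y (i + 1) + x else y (i + 1 + j))
      (by norm_num)
      (by
        intro x j
        cases j with
        | zero => norm_num
        | succ j =>
          rw [if_neg (Nat.succ_ne_zero j), if_neg (Nat.succ_ne_zero j),
            if_neg (Nat.succ_ne_zero (j + 1))]
          congr 1
          omega)]

end DyckAux

/-- equation (15) of the paper: for `n ≥ 1` and `y_0, …, y_{n-1} ≥ 0`,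
`P_n(y_0,…,y_{n-1}) = ∫_0^{y_0} dx_0 ∫_0^{y_1+x_0} dx_1 ⋯ ∫_0^{y_{n-1}+x_{n-2}} dx_{n-1}`
(the outermost integral corresponds to `c = 0`, so its upper limit is `y_0`). -/
theorem Ppoly_eq_nestedIntegral (n : ℕ) (hn : 1 ≤ n) (y : ℕ → ℝ) (hy : ∀ i < n, 0 ≤ y i) :
    Ppoly n y = nestedIntegral y n 0 0 := by
  rw [DyckAux.nested_eq y n 0 0]
  congr 1
  funext j
  rcases j with _ | j
  · simp
  · simp
end

section
/- For all integers n ≥ 2 and 1 ≤ j ≤ n, the polynomial identity P_n^{(j)}(y_1,…,y_{n−1}) = Σ_{k=0}^{n−j} (y_1^k / k!) · P_{n−1}^{(k+j−1)}(y_2,…,y_{n−1}) holds, where by convention P_m^{(0)} = 0 for m ≥ 1. -/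
/-- `𝒟_n^{(i)}`: the path starts with exactly `i` up-steps followed by a down-step. -/
def startsWithUps (n i : ℕ) (w : Fin (2 * n) → Bool) : Prop :=
  ∀ p : Fin (2 * n), ((p : ℕ) < i → w p = true) ∧ ((p : ℕ) = i → w p = false)

open Classical in
/-- The polynomial `P_n^{(i)}(y_1, …, y_{n-1})` defined by
`Σ_{π ∈ 𝒟_n^{(i)}} P_π(y_0,…,y_{n-1}) = (y_0^i/i!) · P_n^{(i)}(y_1,…,y_{n-1})`. Since every
`π ∈ 𝒟_n^{(i)}` satisfies `α_0(π) = i`, this means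
`P_n^{(i)}(y_1,…,y_{n-1}) = Σ_{π ∈ 𝒟_n^{(i)}} Π_{j=1}^{n-1} y_j^{α_j(π)}/α_j(π)!`
(the argument `y : ℕ → ℝ` is only used through the values `y 1, …, y (n-1)`). -/
noncomputable def PpolyUp (n i : ℕ) (y : ℕ → ℝ) : ℝ :=
  ∑ w ∈ (dyckPaths n).filter (fun w => startsWithUps n i w),
    ∏ j ∈ Finset.Ico 1 n, y j ^ alpha n w j / (alpha n w j).factorial


namespace Eq17Aux

/-- count of `true`s of `W` below `m`. -/
def cnt (W : ℕ → Bool) (m : ℕ) : ℕ := ((Finset.range m).filter (fun q => W q = true)).card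

lemma cnt_mono (W : ℕ → Bool) {a b : ℕ} (h : a ≤ b) : cnt W a ≤ cnt W b :=
  Finset.card_le_card (Finset.filter_subset_filter _ (Finset.range_subset_range.2 h))

lemma cnt_all (W : ℕ → Bool) {m : ℕ} (h : ∀ q < m, W q = true) : cnt W m = m := by
  unfold cnt
  rw [Finset.filter_true_of_mem fun q hq => h q (Finset.mem_range.1 hq), Finset.card_range]

lemma cnt_lt (W : ℕ → Bool) {i m : ℕ} (him : i < m) (hf : W i = false) : cnt W m < m := by
  have hsub : (Finset.range m).filter (fun q => W q = true) ⊆ (Finset.range m).erase i := by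
    intro q hq
    rw [Finset.mem_filter] at hq
    refine Finset.mem_erase.2 ⟨?_, hq.1⟩
    rintro rfl
    rw [hf] at hq; simp at hq
  have h2 := Finset.card_le_card hsub
  rw [Finset.card_erase_of_mem (Finset.mem_range.2 him), Finset.card_range] at h2
  unfold cnt; omega

lemma cnt_eq_sum (W : ℕ → Bool) (m : ℕ) :
    cnt W m = ∑ q ∈ Finset.range m, if W q = true then 1 else 0 :=
  Finset.card_filter _ _

lemma cnt_split (W : ℕ → Bool) {a b : ℕ} (h : a ≤ b) :
    cnt W b = cnt W a + ∑ q ∈ Finset.Ico a b, if W q = true then 1 else 0 := by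
  rw [cnt_eq_sum, cnt_eq_sum, Finset.range_eq_Ico, Finset.range_eq_Ico]
  exact (Finset.sum_Ico_consecutive (fun q => if W q = true then (1 : ℕ) else 0) (Nat.zero_le a) h).symm

/-- the ℕ-extension of a word, false beyond `2n`. -/
def Wn (n : ℕ) (w : Fin (2 * n) → Bool) : ℕ → Bool :=
  fun q => if h : q < 2 * n then w ⟨q, h⟩ else false

lemma Wn_mk {n : ℕ} (w : Fin (2 * n) → Bool) {q : ℕ} (h : q < 2 * n) :
    Wn n w q = w ⟨q, h⟩ := dif_pos h

lemma upCount_eq_cnt (n : ℕ) (w : Fin (2 * n) → Bool) (m : ℕ) :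
    upCount n w m = cnt (Wn n w) m := by
  unfold upCount cnt
  refine Finset.card_bij (fun p _ => (p : ℕ)) ?_ ?_ ?_
  · intro p hp
    simp only [Finset.mem_filter, Finset.mem_univ, true_and] at hp
    simp only [Finset.mem_filter, Finset.mem_range]
    refine ⟨hp.1, ?_⟩
    rw [Wn_mk _ p.isLt]
    simpa using hp.2
  · intro p _ q _ h
    exact Fin.val_injective h
  · intro q hq
    simp only [Finset.mem_filter, Finset.mem_range] at hq
    obtain ⟨hq1, hq2⟩ := hq
    by_cases h : q < 2 * n
    · refine ⟨⟨q, h⟩, ?_, rfl⟩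
      simp only [Finset.mem_filter, Finset.mem_univ, true_and]
      refine ⟨hq1, ?_⟩
      rw [Wn_mk _ h] at hq2
      exact hq2
    · rw [Wn] at hq2
      rw [dif_neg h] at hq2
      simp at hq2

/-- insert `U^j D` at the front and delete the `j-1` leading `U`s. -/
def Eext (N j : ℕ) (w' : Fin (2 * N) → Bool) : Fin (2 * (N + 1)) → Bool :=
  fun p => if (p : ℕ) < j then true else if (p : ℕ) = j then false
    else if h : (p : ℕ) - 2 < 2 * N then w' ⟨(p : ℕ) - 2, h⟩ else false

/-- inverse: delete positions `j-1` and `j`. -/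
def Ddel (N j : ℕ) (w : Fin (2 * (N + 1)) → Bool) : Fin (2 * N) → Bool :=
  fun p => if (p : ℕ) < j - 1 then true
    else w ⟨(p : ℕ) + 2, by have := p.isLt; omega⟩

lemma WnE (N j : ℕ) (hjN : j ≤ N + 1) (w' : Fin (2 * N) → Bool) (q : ℕ) :
    Wn (N + 1) (Eext N j w') q
      = if q < j then true else if q = j then false else Wn N w' (q - 2) := by
  by_cases h : q < 2 * (N + 1)
  · rw [Wn_mk _ h]
    rfl
  · have h1 : ¬ q < j := by omega
    have h2 : ¬ q = j := by omega
    rw [if_neg h1, if_neg h2]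
    unfold Wn
    rw [dif_neg h, dif_neg (by omega)]

lemma cntE_low {N j : ℕ} (hjN : j ≤ N + 1) (w' : Fin (2 * N) → Bool) {m : ℕ} (hm : m ≤ j) :
    cnt (Wn (N + 1) (Eext N j w')) m = m := by
  apply cnt_all
  intro q hq
  rw [WnE N j hjN, if_pos (by omega)]

lemma cntE_high {N j : ℕ} (hj : 1 ≤ j) (hjN : j ≤ N + 1) {w' : Fin (2 * N) → Bool}
    (hw' : ∀ q, q < j - 1 → Wn N w' q = true) {m : ℕ} (hm : j + 1 ≤ m) :
    cnt (Wn (N + 1) (Eext N j w')) m = cnt (Wn N w') (m - 2) + 1 := by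
  have hE1 : cnt (Wn (N + 1) (Eext N j w')) m
      = cnt (Wn (N + 1) (Eext N j w')) (j + 1)
        + ∑ q ∈ Finset.Ico (j + 1) m, if Wn (N + 1) (Eext N j w') q = true then 1 else 0 :=
    cnt_split _ hm
  have hE2 : cnt (Wn (N + 1) (Eext N j w')) (j + 1) = j := by
    rw [cnt_split _ (Nat.le_succ j), cntE_low hjN w' (le_refl j)]
    have hIco : Finset.Ico j (j + 1) = {j} := by
      rw [Finset.Ico_add_one_right_eq_Icc, Finset.Icc_self]
    rw [hIco, Finset.sum_singleton, WnE N j hjN, if_neg (lt_irrefl j), if_pos rfl]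
    simp
  have hW2 : cnt (Wn N w') (m - 2)
      = cnt (Wn N w') (j - 1)
        + ∑ q ∈ Finset.Ico (j - 1) (m - 2), if Wn N w' q = true then 1 else 0 :=
    cnt_split _ (by omega)
  have hW3 : cnt (Wn N w') (j - 1) = j - 1 := cnt_all _ (fun q hq => hw' q hq)
  have hsum : (∑ q ∈ Finset.Ico (j + 1) m, if Wn (N + 1) (Eext N j w') q = true then 1 else 0)
      = ∑ q ∈ Finset.Ico (j - 1) (m - 2), if Wn N w' q = true then 1 else 0 := by
    rw [Finset.sum_Ico_eq_sum_range, Finset.sum_Ico_eq_sum_range]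
    have hr : m - 2 - (j - 1) = m - (j + 1) := by omega
    rw [hr]
    apply Finset.sum_congr rfl
    intro i _
    rw [WnE N j hjN, if_neg (show ¬ (j + 1 + i < j) by omega),
      if_neg (show ¬ (j + 1 + i = j) by omega)]
    have hr2 : j + 1 + i - 2 = j - 1 + i := by omega
    rw [hr2]
  omega

lemma dyckE_iff {N j : ℕ} (hj : 1 ≤ j) (hjN : j ≤ N + 1) {w' : Fin (2 * N) → Bool}
    (hw' : ∀ q, q < j - 1 → Wn N w' q = true) :
    IsDyckPath (N + 1) (Eext N j w') ↔ IsDyckPath N w' := by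
  have hend : upCount (N + 1) (Eext N j w') (2 * (N + 1)) = upCount N w' (2 * N) + 1 := by
    rw [upCount_eq_cnt, upCount_eq_cnt, cntE_high hj hjN hw' (by omega)]
    have hr : 2 * (N + 1) - 2 = 2 * N := by omega
    rw [hr]
  constructor
  · rintro ⟨h1, h2⟩
    refine ⟨?_, by omega⟩
    intro m hm
    rw [upCount_eq_cnt]
    rcases Nat.lt_or_ge m j with hc | hc
    · have := cnt_all (Wn N w') (m := m) (fun q hq => hw' q (by omega))
      omega
    · have h3 := h1 (m + 2) (by omega)
      rw [upCount_eq_cnt, cntE_high hj hjN hw' (by omega)] at h3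
      have hr : m + 2 - 2 = m := by omega
      rw [hr] at h3
      omega
  · rintro ⟨h1, h2⟩
    refine ⟨?_, by omega⟩
    intro m hm
    rw [upCount_eq_cnt]
    rcases le_or_gt m j with hc | hc
    · rw [cntE_low hjN w' hc]; omega
    · rw [cntE_high hj hjN hw' (by omega)]
      have h3 := h1 (m - 2) (by omega)
      rw [upCount_eq_cnt] at h3
      omega

lemma alphaE {N j : ℕ} (hj : 1 ≤ j) (hjN : j ≤ N + 1) {w' : Fin (2 * N) → Bool}
    (hw' : ∀ q, q < j - 1 → Wn N w' q = true) {i : ℕ} (hi : 1 ≤ i) :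
    alpha (N + 1) (Eext N j w') (i + 1) = alpha N w' i := by
  unfold alpha
  have key : ((Finset.range (2 * (N + 1) + 1)).filter
        (fun m => upCount (N + 1) (Eext N j w') m + (i + 1) = m))
      = ((Finset.range (2 * N + 1)).filter
          (fun m => upCount N w' m + i = m)).image (· + 2) := by
    ext m
    simp only [Finset.mem_filter, Finset.mem_range, Finset.mem_image, upCount_eq_cnt]
    constructor
    · rintro ⟨hm, he⟩
      have hmj : j + 1 ≤ m := by
        by_contra hcon
        have hle : m ≤ j := by omega
        have := cntE_low hjN w' hle
        omega
      have hh := cntE_high hj hjN hw' hmj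
      exact ⟨m - 2, ⟨by omega, by omega⟩, by omega⟩
    · rintro ⟨m', ⟨hm', he'⟩, rfl⟩
      have hmj : j + 1 ≤ m' + 2 := by
        by_contra hcon
        have := cnt_all (Wn N w') (m := m') (fun q hq => hw' q (by omega))
        omega
      have hh := cntE_high hj hjN hw' hmj
      have h2 : m' + 2 - 2 = m' := by omega
      rw [h2] at hh
      exact ⟨by omega, by omega⟩
  rw [key, Finset.card_image_of_injective _ (add_left_injective 2)]

lemma alpha_oneE {N j : ℕ} (hj : 1 ≤ j) (hjN : j ≤ N + 1) {w' : Fin (2 * N) → Bool}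
    (hw' : ∀ q, q < j - 1 → Wn N w' q = true) {i0 : ℕ} (hi0 : i0 ≤ N) (hji : j - 1 ≤ i0)
    (hs : ∀ q < i0, Wn N w' q = true) (hf : Wn N w' i0 = false) :
    alpha (N + 1) (Eext N j w') 1 = i0 + 1 - j := by
  unfold alpha
  have key : ((Finset.range (2 * (N + 1) + 1)).filter
        (fun m => upCount (N + 1) (Eext N j w') m + 1 = m))
      = Finset.Ico (j + 1) (i0 + 3) := by
    ext m
    simp only [Finset.mem_filter, Finset.mem_range, Finset.mem_Ico, upCount_eq_cnt]
    constructor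
    · rintro ⟨hm, he⟩
      have hmj : j + 1 ≤ m := by
        by_contra hcon
        have hle : m ≤ j := by omega
        have := cntE_low hjN w' hle
        omega
      have hh := cntE_high hj hjN hw' hmj
      refine ⟨hmj, ?_⟩
      by_contra hcon
      have hlt := cnt_lt (Wn N w') (i := i0) (m := m - 2) (by omega) hf
      omega
    · rintro ⟨h1, h2⟩
      have hh := cntE_high hj hjN hw' h1
      have hc : cnt (Wn N w') (m - 2) = m - 2 :=
        cnt_all _ (fun q hq => hs q (by omega))
      exact ⟨by omega, by omega⟩
  rw [key, Nat.card_Ico]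
  omega

lemma startsWithE (N j : ℕ) (w' : Fin (2 * N) → Bool) :
    startsWithUps (N + 1) j (Eext N j w') := by
  intro p
  constructor
  · intro h
    exact if_pos h
  · intro h
    unfold Eext
    rw [if_neg (by omega), if_pos h]

lemma E_D {N j : ℕ} (hj : 1 ≤ j) {w0 : Fin (2 * (N + 1)) → Bool}
    (hst : startsWithUps (N + 1) j w0) :
    Eext N j (Ddel N j w0) = w0 := by
  funext p
  unfold Eext Ddel
  rcases Nat.lt_or_ge (p : ℕ) j with hc | hc
  · rw [if_pos hc, ((hst p).1 hc).symm]
  · rcases Nat.eq_or_lt_of_le hc with hc2 | hc2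
    · rw [if_neg (by omega), if_pos hc2.symm, ((hst p).2 hc2.symm).symm]
    · have hplt := p.isLt
      rw [if_neg (by omega), if_neg (by omega), dif_pos (show (p : ℕ) - 2 < 2 * N by omega)]
      rw [if_neg (show ¬ ((⟨(p : ℕ) - 2, by omega⟩ : Fin (2 * N)) : ℕ) < j - 1 by
        simp only [Fin.val_mk]; omega)]
      congr 1
      apply Fin.ext
      simp only [Fin.val_mk]
      try omega

lemma D_E {N j : ℕ} (hj : 1 ≤ j) {w' : Fin (2 * N) → Bool}
    (hw' : ∀ q, q < j - 1 → Wn N w' q = true) :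
    Ddel N j (Eext N j w') = w' := by
  funext p
  unfold Ddel Eext
  rcases Nat.lt_or_ge (p : ℕ) (j - 1) with hc | hc
  · rw [if_pos hc]
    have h := hw' p hc
    rw [Wn_mk _ p.isLt] at h
    simp only [Fin.eta] at h
    exact h.symm
  · have hplt := p.isLt
    rw [if_neg (by omega)]
    rw [if_neg (show ¬ ((⟨(p : ℕ) + 2, by omega⟩ : Fin (2 * (N + 1))) : ℕ) < j by
      simp only [Fin.val_mk]; omega)]
    rw [if_neg (show ¬ ((⟨(p : ℕ) + 2, by omega⟩ : Fin (2 * (N + 1))) : ℕ) = j by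
      simp only [Fin.val_mk]; omega)]
    rw [dif_pos (show ((⟨(p : ℕ) + 2, by omega⟩ : Fin (2 * (N + 1))) : ℕ) - 2 < 2 * N by
      simp only [Fin.val_mk]; omega)]
    congr 1

lemma startsWith_facts {N : ℕ} (hN : 1 ≤ N) {w' : Fin (2 * N) → Bool}
    (hd : IsDyckPath N w') {i : ℕ} (hsw : startsWithUps N i w') :
    i ≤ N ∧ (∀ q < i, Wn N w' q = true) ∧ Wn N w' i = false := by
  have hi2N : i < 2 * N := by
    by_contra hcon
    have hall : ∀ q < 2 * N, Wn N w' q = true := by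
      intro q hq
      rw [Wn_mk _ hq]
      exact (hsw ⟨q, hq⟩).1 (by simp only [Fin.val_mk]; omega)
    have := cnt_all _ hall
    have h2 := hd.2
    rw [upCount_eq_cnt] at h2
    omega
  have hs : ∀ q < i, Wn N w' q = true := by
    intro q hq
    rw [Wn_mk _ (by omega)]
    exact (hsw ⟨q, by omega⟩).1 (by simp only [Fin.val_mk]; omega)
  have hf : Wn N w' i = false := by
    rw [Wn_mk _ hi2N]
    exact (hsw ⟨i, hi2N⟩).2 (by simp only [Fin.val_mk])
  refine ⟨?_, hs, hf⟩
  have h1 : cnt (Wn N w') i = i := cnt_all _ hs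
  have h2 : cnt (Wn N w') i ≤ cnt (Wn N w') (2 * N) := cnt_mono _ (by omega)
  have h3 := hd.2
  rw [upCount_eq_cnt] at h3
  omega

lemma exists_startsWith {N : ℕ} (hN : 1 ≤ N) {w' : Fin (2 * N) → Bool}
    (hd : IsDyckPath N w') : ∃ i, startsWithUps N i w' := by
  classical
  have hne : (Finset.univ.filter (fun p : Fin (2 * N) => w' p = false)).Nonempty := by
    by_contra hcon
    rw [Finset.not_nonempty_iff_eq_empty, Finset.filter_eq_empty_iff] at hcon
    have hall : ∀ q < 2 * N, Wn N w' q = true := by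
      intro q hq
      rw [Wn_mk _ hq]
      have := hcon (Finset.mem_univ (⟨q, hq⟩ : Fin (2 * N)))
      simpa using this
    have := cnt_all _ hall
    have h2 := hd.2
    rw [upCount_eq_cnt] at h2
    omega
  obtain ⟨p0, hp0mem, hp0min⟩ :
      ∃ p0 ∈ Finset.univ.filter (fun p : Fin (2 * N) => w' p = false),
        ∀ p ∈ Finset.univ.filter (fun p : Fin (2 * N) => w' p = false), p0 ≤ p :=
    ⟨_, Finset.min'_mem _ hne, fun p hp => Finset.min'_le _ p hp⟩
  rw [Finset.mem_filter] at hp0mem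
  refine ⟨(p0 : ℕ), fun p => ⟨?_, ?_⟩⟩
  · intro h
    by_contra hcon
    have hpf : w' p = false := by
      cases hw : w' p
      · rfl
      · exact absurd hw hcon
    have hle := hp0min p (Finset.mem_filter.2 ⟨Finset.mem_univ _, hpf⟩)
    have := Fin.le_def.1 hle
    omega
  · intro h
    have hpp : p = p0 := Fin.ext h
    rw [hpp]
    exact hp0mem.2

end Eq17Aux


section Eq17Glue

open Eq17Aux

lemma forward_facts {N j : ℕ} (hN : 1 ≤ N) (hj : 1 ≤ j) (hjN : j ≤ N + 1)
    {w0 : Fin (2 * (N + 1)) → Bool} (hd : IsDyckPath (N + 1) w0)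
    (hst : startsWithUps (N + 1) j w0) :
    ∃ i0, i0 ≤ N ∧ j - 1 ≤ i0 ∧ alpha (N + 1) w0 1 = i0 + 1 - j
      ∧ IsDyckPath N (Ddel N j w0) ∧ startsWithUps N i0 (Ddel N j w0)
      ∧ Eext N j (Ddel N j w0) = w0
      ∧ (∀ i, 1 ≤ i → alpha N (Ddel N j w0) i = alpha (N + 1) w0 (i + 1)) := by
  have hw'tr : ∀ q, q < j - 1 → Wn N (Ddel N j w0) q = true := by
    intro q hq
    rw [Wn_mk _ (show q < 2 * N by omega)]
    unfold Ddel
    rw [if_pos (show ((⟨q, by omega⟩ : Fin (2 * N)) : ℕ) < j - 1 by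
      simp only [Fin.val_mk]; omega)]
  have hED : Eext N j (Ddel N j w0) = w0 := E_D hj hst
  have hd' : IsDyckPath N (Ddel N j w0) := (dyckE_iff hj hjN hw'tr).1 (by rw [hED]; exact hd)
  obtain ⟨i0, hsw⟩ := exists_startsWith hN hd'
  obtain ⟨hi0N, hs, hf⟩ := startsWith_facts hN hd' hsw
  have hji : j - 1 ≤ i0 := by
    by_contra hcon
    have := hw'tr i0 (by omega)
    rw [hf] at this
    simp at this
  have ha : alpha (N + 1) w0 1 = i0 + 1 - j := by
    rw [← hED]
    exact alpha_oneE hj hjN hw'tr hi0N hji hs hf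
  refine ⟨i0, hi0N, hji, ha, hd', hsw, hED, ?_⟩
  intro i hi
  conv_rhs => rw [← hED]
  exact (alphaE hj hjN hw'tr hi).symm

lemma backward_facts {N j : ℕ} (hN : 1 ≤ N) (hj : 1 ≤ j) (hjN : j ≤ N + 1)
    {k : ℕ} {w' : Fin (2 * N) → Bool} (hd' : IsDyckPath N w')
    (hsw : startsWithUps N (k + j - 1) w') :
    k ≤ N + 1 - j ∧ IsDyckPath (N + 1) (Eext N j w')
      ∧ startsWithUps (N + 1) j (Eext N j w')
      ∧ alpha (N + 1) (Eext N j w') 1 = k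
      ∧ Ddel N j (Eext N j w') = w' := by
  obtain ⟨hi0N, hs, hf⟩ := startsWith_facts hN hd' hsw
  have hw'tr : ∀ q, q < j - 1 → Wn N w' q = true := fun q hq => hs q (by omega)
  have ha := alpha_oneE hj hjN hw'tr hi0N (by omega) hs hf
  exact ⟨by omega, (dyckE_iff hj hjN hw'tr).2 hd', startsWithE N j w',
    by rw [ha]; omega, D_E hj hw'tr⟩

end Eq17Glue

/-- equation (17) of the paper: for `n ≥ 2` and `1 ≤ j ≤ n`,
`P_n^{(j)}(y_1,…,y_{n-1}) = Σ_{k=0}^{n-j} (y_1^k/k!) · P_{n-1}^{(k+j-1)}(y_2,…,y_{n-1})`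
(with the convention `P_m^{(0)} = 0` for `m ≥ 1`, which holds automatically here since no
Dyck path of positive length starts with a down-step). -/
theorem PpolyUp_recursion (n j : ℕ) (hn : 2 ≤ n) (hj1 : 1 ≤ j) (hjn : j ≤ n) (y : ℕ → ℝ) :
    PpolyUp n j y
      = ∑ k ∈ Finset.range (n - j + 1),
          y 1 ^ k / (Nat.factorial k) * PpolyUp (n - 1) (k + j - 1) (fun i => y (i + 1)) := by
  classical
  obtain ⟨N, rfl⟩ : ∃ N, n = N + 1 := ⟨n - 1, by omega⟩
  have hN : 1 ≤ N := by omega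
  have hjN : j ≤ N + 1 := hjn
  simp only [PpolyUp, Nat.add_sub_cancel, Nat.succ_sub_one, Finset.mul_sum]
  rw [Finset.sum_sigma' (Finset.range (N + 1 - j + 1))
    (fun k => Finset.filter (fun w => startsWithUps N (k + j - 1) w) (dyckPaths N))
    (fun k w' => y 1 ^ k / (k.factorial : ℝ)
      * ∏ x ∈ Finset.Ico 1 N, y (x + 1) ^ alpha N w' x / ((alpha N w' x).factorial : ℝ))]
  refine Finset.sum_bij'
    (fun w0 _ => (⟨alpha (N + 1) w0 1, Eq17Aux.Ddel N j w0⟩ :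
      (_ : ℕ) × (Fin (2 * N) → Bool)))
    (fun b _ => Eq17Aux.Eext N j b.2) ?_ ?_ ?_ ?_ ?_
  · -- hi : forward membership
    intro w0 hw0
    simp only [Finset.mem_filter, dyckPaths, Finset.mem_univ, true_and] at hw0
    obtain ⟨hd, hst⟩ := hw0
    obtain ⟨i0, hi0N, hji, ha, hd', hsw, hED, halphas⟩ := forward_facts hN hj1 hjN hd hst
    rw [Finset.mem_sigma]
    constructor
    · rw [Finset.mem_range]
      show alpha (N + 1) w0 1 < N + 1 - j + 1
      omega
    · show Eq17Aux.Ddel N j w0 ∈ Finset.filter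
        (fun w => startsWithUps N (alpha (N + 1) w0 1 + j - 1) w) (dyckPaths N)
      simp only [Finset.mem_filter, dyckPaths, Finset.mem_univ, true_and]
      refine ⟨hd', ?_⟩
      have hkk : alpha (N + 1) w0 1 + j - 1 = i0 := by omega
      rw [hkk]
      exact hsw
  · -- hj : backward membership
    intro b hb
    rw [Finset.mem_sigma] at hb
    obtain ⟨hb1, hb2⟩ := hb
    simp only [Finset.mem_filter, dyckPaths, Finset.mem_univ, true_and] at hb2
    obtain ⟨hd', hsw⟩ := hb2
    obtain ⟨hk, hdE, hstE, haE, hDE⟩ := backward_facts hN hj1 hjN hd' hsw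
    simp only [Finset.mem_filter, dyckPaths, Finset.mem_univ, true_and]
    exact ⟨hdE, hstE⟩
  · -- left_inv
    intro w0 hw0
    simp only [Finset.mem_filter, dyckPaths, Finset.mem_univ, true_and] at hw0
    exact Eq17Aux.E_D hj1 hw0.2
  · -- right_inv
    intro b hb
    rw [Finset.mem_sigma] at hb
    obtain ⟨hb1, hb2⟩ := hb
    simp only [Finset.mem_filter, dyckPaths, Finset.mem_univ, true_and] at hb2
    obtain ⟨hd', hsw⟩ := hb2
    obtain ⟨hk, hdE, hstE, haE, hDE⟩ := backward_facts hN hj1 hjN hd' hsw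
    rw [haE, hDE]
  · -- values
    intro w0 hw0
    simp only [Finset.mem_filter, dyckPaths, Finset.mem_univ, true_and] at hw0
    obtain ⟨hd, hst⟩ := hw0
    obtain ⟨i0, hi0N, hji, ha, hd', hsw, hED, halphas⟩ := forward_facts hN hj1 hjN hd hst
    dsimp only
    rw [Finset.prod_eq_prod_Ico_succ_bot (show 1 < N + 1 by omega)]
    congr 1
    rw [Finset.prod_Ico_eq_prod_range, Finset.prod_Ico_eq_prod_range]
    have hr : N + 1 - 2 = N - 1 := by omega
    rw [hr]
    apply Finset.prod_congr rfl
    intro i _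
    have halpha := halphas (1 + i) (by omega)
    have h2 : 2 + i = 1 + i + 1 := by omega
    rw [h2, ← halpha]
end
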